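/- arXiv:1406.3698 — 7 statements merged into one kernel-verified Lean document; each statement's English description precedes it below -/
import Mathlib

section
/- For every real number μ > 0 and every E > 0 there exists a positive integer J such that for every prime p and every integer j ≥ J, one has max{τ(p^j + m) : m ∈ ℕ, 1 ≤ m, (m : ℝ) ≤ (p^j)^(1/μ)} > E · τ(p^j); equivalently, along any sequence n_k = p_k^{j_k} of prime powers with j_k → ∞, the ratio T_{n_k}(μ) = max_{1 ≤ m ≤ n_k^{1/μ}} τ(n_k + m) / τ(n_k) tends to infinity. -/
/-- `τ n` is the number of positive divisors of `n`. -/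
def tau (n : ℕ) : ℕ := n.divisors.card

lemma tau_prime_pow {p : ℕ} (pp : p.Prime) (k : ℕ) : tau (p ^ k) = k + 1 := by
  rw [tau, Nat.divisors_prime_pow pp, Finset.card_map, Finset.card_range]

lemma tau_le_of_dvd {m n : ℕ} (hn : n ≠ 0) (h : m ∣ n) : tau m ≤ tau n :=
  Finset.card_le_card (Nat.divisors_subset_of_dvd hn h)

lemma tau_six_pow (a : ℕ) : tau (6 ^ a) = (a + 1) ^ 2 := by
  have h6 : (6 : ℕ) ^ a = 2 ^ a * 3 ^ a := by
    have : (6 : ℕ) = 2 * 3 := by norm_num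
    rw [this, mul_pow]
  have hcop : Nat.Coprime (2 ^ a) (3 ^ a) :=
    Nat.Coprime.pow _ _ (by norm_num)
  have : tau (2 ^ a * 3 ^ a) = tau (2 ^ a) * tau (3 ^ a) :=
    Nat.Coprime.card_divisors_mul hcop
  rw [h6, this, tau_prime_pow Nat.prime_two, tau_prime_pow Nat.prime_three, sq]

/-- For every `μ > 0` and `E > 0` there is `J` such that for every prime `p` and
`j ≥ J`, the maximum of `τ (p^j + m)` over integers `m` with `1 ≤ m` and
`(m : ℝ) ≤ (p^j)^(1/μ)` exceeds `E · τ (p^j)`. -/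
theorem tendsto_T_of_exponent_tendsto (μ : ℝ) (hμ : 0 < μ) (E : ℝ) (hE : 0 < E) :
    ∃ J : ℕ, 0 < J ∧ ∀ p j : ℕ, p.Prime → J ≤ j →
      (((Finset.Icc 1 ⌊((p ^ j : ℕ) : ℝ) ^ (1 / μ)⌋₊).sup
        (fun m => tau (p ^ j + m)) : ℕ) : ℝ) > E * (tau (p ^ j) : ℝ) := by
  set c : ℕ := ⌈3 * μ⌉₊ with hcdef
  have hcpos : 0 < c := Nat.ceil_pos.mpr (by linarith)
  have hcμ : 3 * μ ≤ (c : ℝ) := Nat.le_ceil _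
  refine ⟨2 * c ^ 2 * (⌈E⌉₊ + 1), by positivity, ?_⟩
  intro p j hp hJ
  have hjpos : 0 < j := lt_of_lt_of_le (by positivity) hJ
  set N := p ^ j with hNdef
  have hp2 : 2 ≤ p := hp.two_le
  have hNpos : 0 < N := pow_pos hp.pos j
  set a := j / c with hadef
  set M := 6 ^ a with hMdef
  have hMpos : 0 < M := pow_pos (by norm_num) a
  set q := N / M with hqdef
  have hdm : M * q + N % M = N := Nat.div_add_mod N M
  have hmod : N % M < M := Nat.mod_lt _ hMpos
  set m := M * (q + 1) - N with hmdef
  have hexp : M * (q + 1) = M * q + M := by ring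
  have hm1 : 1 ≤ m := by omega
  have hmM : m ≤ M := by omega
  have hNm : N + m = M * (q + 1) := by omega
  have hdvd : M ∣ N + m := ⟨q + 1, hNm⟩
  -- key real bound: (M : ℝ) ≤ (N : ℝ) ^ (1/μ)
  have haj : (a : ℝ) * c ≤ j := by
    have := Nat.div_mul_le_self j c
    exact_mod_cast this
  have hja : (j : ℝ) < c * (a + 1) := by
    have hd : c * a + j % c = j := Nat.div_add_mod j c
    have hm2 : j % c < c := Nat.mod_lt _ hcpos
    have hexp2 : c * (a + 1) = c * a + c := by ring
    have : j < c * (a + 1) := by omega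
    exact_mod_cast this
  have hcR : (0 : ℝ) < c := by exact_mod_cast hcpos
  have h3a : (3 * a : ℝ) ≤ (j : ℝ) / μ := by
    rw [le_div_iff₀ hμ]
    have h1 : (3 : ℝ) * a * μ ≤ a * c := by
      have : (3 : ℝ) * μ ≤ c := hcμ
      have ha0 : (0 : ℝ) ≤ a := Nat.cast_nonneg a
      nlinarith
    linarith
  have hMle : (M : ℝ) ≤ ((N : ℕ) : ℝ) ^ (1 / μ) := by
    have e1 : ((M : ℕ) : ℝ) = (6 : ℝ) ^ a := by push_cast [hMdef]; ring
    have e2 : (6 : ℝ) ^ a ≤ (2 : ℝ) ^ (3 * a) := by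
      rw [pow_mul]
      exact pow_le_pow_left₀ (by norm_num) (by norm_num) a
    have e3 : (2 : ℝ) ^ (3 * a) = (2 : ℝ) ^ ((3 * a : ℕ) : ℝ) := by
      rw [Real.rpow_natCast]
    have e4 : (2 : ℝ) ^ ((3 * a : ℕ) : ℝ) ≤ (2 : ℝ) ^ ((j : ℝ) / μ) := by
      apply Real.rpow_le_rpow_of_exponent_le (by norm_num)
      push_cast
      exact h3a
    have e5 : (2 : ℝ) ^ ((j : ℝ) / μ) ≤ (p : ℝ) ^ ((j : ℝ) / μ) := by
      apply Real.rpow_le_rpow (by norm_num) (by exact_mod_cast hp2)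
      positivity
    have e6 : (p : ℝ) ^ ((j : ℝ) / μ) = ((N : ℕ) : ℝ) ^ (1 / μ) := by
      rw [hNdef]
      push_cast
      rw [← Real.rpow_natCast (p : ℝ) j, ← Real.rpow_mul (by positivity)]
      ring_nf
    calc ((M : ℕ) : ℝ) = (6 : ℝ) ^ a := e1
      _ ≤ (2 : ℝ) ^ (3 * a) := e2
      _ = _ := e3
      _ ≤ (2 : ℝ) ^ ((j : ℝ) / μ) := e4
      _ ≤ (p : ℝ) ^ ((j : ℝ) / μ) := e5
      _ = _ := e6
  have hmem : m ∈ Finset.Icc 1 ⌊((N : ℕ) : ℝ) ^ (1 / μ)⌋₊ := by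
    rw [Finset.mem_Icc]
    refine ⟨hm1, Nat.le_floor ?_⟩
    calc (m : ℝ) ≤ (M : ℝ) := by exact_mod_cast hmM
      _ ≤ _ := hMle
  -- sup ≥ tau (N + m) ≥ tau M = (a+1)^2
  have hsup : tau (N + m) ≤ (Finset.Icc 1 ⌊((N : ℕ) : ℝ) ^ (1 / μ)⌋₊).sup
      (fun m => tau (N + m)) := Finset.le_sup (f := fun m => tau (N + m)) hmem
  have htauM : (a + 1) ^ 2 ≤ tau (N + m) := by
    rw [← tau_six_pow a]
    exact tau_le_of_dvd (by omega) hdvd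
  have htauN : tau N = j + 1 := tau_prime_pow hp j
  -- final numeric inequality
  have hjR : (2 : ℝ) * c ^ 2 * (⌈E⌉₊ + 1) ≤ j := by exact_mod_cast hJ
  have hEceil : E < (⌈E⌉₊ : ℝ) + 1 := lt_of_le_of_lt (Nat.le_ceil E) (by linarith)
  have hkey : E * ((j : ℝ) + 1) < ((a : ℝ) + 1) ^ 2 := by
    have hj1 : (1 : ℝ) ≤ j := by exact_mod_cast hjpos
    have h2E : 2 * E * (c : ℝ) ^ 2 < j := by nlinarith
    nlinarith [sq_nonneg ((c : ℝ) * (a + 1) - j), hja, hcR, hE, hj1]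
  calc E * (tau N : ℝ) = E * ((j : ℝ) + 1) := by rw [htauN]; push_cast; ring
    _ < ((a : ℝ) + 1) ^ 2 := hkey
    _ ≤ (tau (N + m) : ℝ) := by exact_mod_cast htauM
    _ ≤ _ := by exact_mod_cast hsup
end

section
/- For every integer μ ≥ 2 there exist a constant c > 0 and a positive integer M such that for every integer m ≥ M, ∑_{s=1}^{m} (s + 1) · Δ(μm − s) ≥ c · m² · ln(ln m). -/
/-- `Δ n = Ω n` is the number of prime factors of `n` counted with multiplicity. -/
def Delta (n : ℕ) : ℕ := n.primeFactorsList.length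

open Finset Real

lemma inv_one_sub_le_exp {p : ℕ} (hp : 2 ≤ p) :
    ((1:ℝ) - 1/p)⁻¹ ≤ Real.exp (2/p) := by
  have hp' : (2:ℝ) ≤ p := by exact_mod_cast hp
  have hx : (0:ℝ) < 1/p := by positivity
  have hx2 : (1:ℝ)/p ≤ 1/2 := by
    rw [div_le_div_iff₀ (by positivity) (by norm_num)]; linarith
  have h1 : (0:ℝ) < 1 - 1/p := by linarith
  have h2 : ((1:ℝ) - 1/p)⁻¹ ≤ 1 + 2*(1/p) := by
    rw [inv_le_iff_one_le_mul₀ h1]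
    nlinarith
  have h3 : (1:ℝ) + 2*(1/p) ≤ Real.exp (2*(1/p)) := by
    have := Real.add_one_le_exp (2*(1/p)); linarith
  calc ((1:ℝ) - 1/p)⁻¹ ≤ 1 + 2*(1/p) := h2
    _ ≤ Real.exp (2*(1/p)) := h3
    _ = Real.exp (2/p) := by rw [mul_one_div]

lemma harmonic_le_euler_prod (N : ℕ) :
    ∑ n ∈ Finset.Icc 1 N, (1:ℝ)/n ≤ ∏ p ∈ (N+1).primesBelow, ((1:ℝ) - 1/p)⁻¹ := by
  classical
  set P := (N+1).primesBelow with hP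
  have hprime : ∀ p ∈ P, Nat.Prime p := fun p hp => (Nat.mem_primesBelow.mp hp).2
  -- nat product identity
  have hprodnat : ∀ n ∈ Finset.Icc 1 N, ∏ p ∈ P, p ^ n.factorization p = n := by
    intro n hn
    have hn1 : n ≠ 0 := Nat.one_le_iff_ne_zero.mp (Finset.mem_Icc.mp hn).1
    have hsub : n.primeFactors ⊆ P := by
      intro p hp
      rw [hP, Nat.mem_primesBelow]
      refine ⟨?_, Nat.prime_of_mem_primeFactors hp⟩
      have h1 := Nat.le_of_mem_primeFactors hp
      have h2 := (Finset.mem_Icc.mp hn).2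
      omega
    rw [← Finset.prod_subset hsub (by
      intro p _ hp
      have : n.factorization p = 0 := by
        rwa [← Finsupp.notMem_support_iff, Nat.support_factorization]
      rw [this, pow_zero])]
    rw [← Nat.prod_factorization_eq_prod_primeFactors (f := (· ^ ·))]
    exact Nat.factorization_prod_pow_eq_self hn1
  have step2 : ∑ n ∈ Finset.Icc 1 N, (1:ℝ)/n
      ≤ ∏ p ∈ P, ∑ k ∈ Finset.range (N+1), ((1:ℝ)/p)^k := by
    rw [Finset.prod_sum]
    set F : ℕ → ((a : ℕ) → a ∈ P → ℕ) := fun n => fun p _ => n.factorization p with hF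
    have hmem : ∀ n ∈ Finset.Icc 1 N, F n ∈ P.pi (fun _ => Finset.range (N+1)) := by
      intro n hn
      rw [Finset.mem_pi]
      intro p hp
      rw [Finset.mem_range]
      have hn1 : 1 ≤ n := (Finset.mem_Icc.mp hn).1
      have h1 := Nat.factorization_lt (n := n) p (Nat.one_le_iff_ne_zero.mp hn1)
      have hnN := (Finset.mem_Icc.mp hn).2
      show n.factorization p < N + 1
      omega
    have hval : ∀ n ∈ Finset.Icc 1 N,
        ∏ x ∈ P.attach, ((1:ℝ)/(x:ℕ))^(F n x.1 x.2) = 1/n := by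
      intro n hn
      rw [Finset.prod_attach P (fun p => ((1:ℝ)/p)^(n.factorization p))]
      have : ∏ p ∈ P, ((1:ℝ)/p)^(n.factorization p)
          = 1 / ((∏ p ∈ P, p ^ n.factorization p : ℕ) : ℝ) := by
        push_cast
        simp only [one_div, div_pow, one_pow]
        rw [← Finset.prod_inv_distrib]
        exact Finset.prod_congr rfl fun x _ => inv_pow _ _
      rw [this, hprodnat n hn]
    have hinj : ∀ x ∈ Finset.Icc 1 N, ∀ y ∈ Finset.Icc 1 N, F x = F y → x = y := by
      intro x hx y hy hxy
      have : ∏ p ∈ P, p ^ x.factorization p = ∏ p ∈ P, p ^ y.factorization p := by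
        apply Finset.prod_congr rfl
        intro p hp
        have := congrFun (congrFun hxy p) hp
        simp only [hF] at this ⊢
        rw [this]
      rwa [hprodnat x hx, hprodnat y hy] at this
    calc ∑ n ∈ Finset.Icc 1 N, (1:ℝ)/n
        = ∑ g ∈ (Finset.Icc 1 N).image F, ∏ x ∈ P.attach, ((1:ℝ)/(x:ℕ))^(g x.1 x.2) := by
          rw [Finset.sum_image hinj]
          exact (Finset.sum_congr rfl (fun n hn => (hval n hn).symm))
      _ ≤ ∑ g ∈ P.pi (fun _ => Finset.range (N+1)), ∏ x ∈ P.attach, ((1:ℝ)/(x:ℕ))^(g x.1 x.2) := by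
          apply Finset.sum_le_sum_of_subset_of_nonneg
          · intro g hg
            obtain ⟨n, hn, rfl⟩ := Finset.mem_image.mp hg
            exact hmem n hn
          · intro g _ _
            positivity
  refine step2.trans (Finset.prod_le_prod ?_ ?_)
  · intro p _; positivity
  · intro p hp
    have hp2 : 2 ≤ p := (hprime p hp).two_le
    have hp2' : (2:ℝ) ≤ p := by exact_mod_cast hp2
    have hx : (0:ℝ) ≤ 1/p := by positivity
    have hx1 : (1:ℝ)/p < 1 := by
      rw [div_lt_one (by linarith)]; linarith
    calc ∑ k ∈ Finset.range (N+1), ((1:ℝ)/p)^k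
        ≤ ∑' k : ℕ, ((1:ℝ)/p)^k := Summable.sum_le_tsum _ (fun k _ => by positivity)
          (summable_geometric_of_lt_one hx hx1)
      _ = (1 - 1/(p:ℝ))⁻¹ := tsum_geometric_of_lt_one hx hx1

lemma mertens_lower (N : ℕ) (hN : 1 ≤ N) :
    Real.log (Real.log (N+1)) ≤ ∑ p ∈ (N+1).primesBelow, 2/(p:ℝ) := by
  set P := (N+1).primesBelow with hP
  have hprime : ∀ p ∈ P, Nat.Prime p := fun p hp => (Nat.mem_primesBelow.mp hp).2
  have hN2 : (2:ℝ) ≤ (N:ℝ) + 1 := by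
    have : (1:ℝ) ≤ N := by exact_mod_cast hN
    linarith
  have hlogpos : 0 < Real.log ((N:ℝ)+1) := Real.log_pos (by linarith)
  have h1 : Real.log ((N:ℝ)+1) ≤ ∑ n ∈ Finset.Icc 1 N, (1:ℝ)/n := by
    have := log_add_one_le_harmonic N
    rw [harmonic_eq_sum_Icc] at this
    push_cast at this ⊢
    simpa [one_div] using this
  have h2 := harmonic_le_euler_prod N
  have hprodpos : ∀ p ∈ P, (0:ℝ) < ((1:ℝ) - 1/p)⁻¹ := by
    intro p hp
    have hp2 : (2:ℝ) ≤ p := by exact_mod_cast (hprime p hp).two_le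
    have h : (1:ℝ)/p ≤ 1/2 := by
      rw [div_le_div_iff₀ (by linarith) (by norm_num)]; linarith
    have : (0:ℝ) < 1 - 1/p := by linarith
    positivity
  calc Real.log (Real.log ((N:ℕ)+1))
      ≤ Real.log (∏ p ∈ P, ((1:ℝ) - 1/p)⁻¹) := by
        apply Real.log_le_log (by push_cast; exact hlogpos)
        push_cast
        exact le_trans h1 h2
    _ = ∑ p ∈ P, Real.log (((1:ℝ) - 1/p)⁻¹) :=
        Real.log_prod (fun p hp => ne_of_gt (hprodpos p hp))
    _ ≤ ∑ p ∈ P, 2/(p:ℝ) := by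
        apply Finset.sum_le_sum
        intro p hp
        rw [Real.log_le_iff_le_exp (hprodpos p hp)]
        exact inv_one_sub_le_exp (hprime p hp).two_le

lemma count_dvd_Ioc (p a b : ℕ) (hab : a ≤ b) :
    ((Finset.Ioc a b).filter (p ∣ ·)).card = b / p - a / p := by
  have hsplit : Finset.Ioc a b = Finset.Ioc 0 b \ Finset.Ioc 0 a := by
    ext x; simp only [Finset.mem_Ioc, Finset.mem_sdiff]; omega
  have hfilter : (Finset.Ioc a b).filter (p ∣ ·)
      = (Finset.Ioc 0 b).filter (p ∣ ·) \ (Finset.Ioc 0 a).filter (p ∣ ·) := by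
    rw [hsplit]
    ext x; simp only [Finset.mem_filter, Finset.mem_sdiff]; tauto
  rw [hfilter, Finset.card_sdiff_of_subset (by
    apply Finset.filter_subset_filter
    intro x; simp only [Finset.mem_Ioc]; omega)]
  rw [Nat.Ioc_filter_dvd_card_eq_div, Nat.Ioc_filter_dvd_card_eq_div]

lemma card_filter_dvd_le_Delta (n : ℕ) (hn : n ≠ 0) (P : Finset ℕ)
    (hP : ∀ p ∈ P, Nat.Prime p) :
    (P.filter (· ∣ n)).card ≤ Delta n := by
  have hsub : P.filter (· ∣ n) ⊆ n.primeFactors := by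
    intro p hp
    rw [Finset.mem_filter] at hp
    exact Nat.mem_primeFactors.mpr ⟨hP p hp.1, hp.2, hn⟩
  calc (P.filter (· ∣ n)).card ≤ n.primeFactors.card := Finset.card_le_card hsub
    _ ≤ n.primeFactorsList.length := List.toFinset_card_le _
    _ = Delta n := rfl

lemma sum_Delta_lower (a b : ℕ) (hab : a ≤ b) (P : Finset ℕ)
    (hP : ∀ p ∈ P, Nat.Prime p) :
    ∑ p ∈ P, (b / p - a / p) ≤ ∑ n ∈ Finset.Ioc a b, Delta n := by
  calc ∑ p ∈ P, (b / p - a / p)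
      = ∑ p ∈ P, ((Finset.Ioc a b).filter (p ∣ ·)).card := by
        exact Finset.sum_congr rfl fun p _ => (count_dvd_Ioc p a b hab).symm
    _ = ∑ p ∈ P, ∑ n ∈ Finset.Ioc a b, (if p ∣ n then 1 else 0) := by
        exact Finset.sum_congr rfl fun p _ => by rw [Finset.card_filter]
    _ = ∑ n ∈ Finset.Ioc a b, ∑ p ∈ P, (if p ∣ n then 1 else 0) := Finset.sum_comm
    _ ≤ ∑ n ∈ Finset.Ioc a b, Delta n := by
        apply Finset.sum_le_sum
        intro n hn
        have hn0 : n ≠ 0 := by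
          have := (Finset.mem_Ioc.mp hn).1; omega
        calc ∑ p ∈ P, (if p ∣ n then 1 else 0)
            = (P.filter (· ∣ n)).card := by rw [Finset.card_filter]
          _ ≤ Delta n := card_filter_dvd_le_Delta n hn0 P hP

set_option maxHeartbeats 1000000 in
/-- For every integer `μ ≥ 2` there are `c > 0` and `M` such that for all `m ≥ M`,
`∑_{s=1}^{m} (s+1) Δ(μm − s) ≥ c m² ln (ln m)`. -/
theorem sum_weighted_Delta_ge (μ : ℕ) (hμ : 2 ≤ μ) :
    ∃ c : ℝ, 0 < c ∧ ∃ M : ℕ, 0 < M ∧ ∀ m : ℕ, M ≤ m →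
      ((∑ s ∈ Finset.Icc 1 m, (s + 1) * Delta (μ * m - s) : ℕ) : ℝ)
        ≥ c * (m : ℝ) ^ 2 * Real.log (Real.log m) := by
  refine ⟨1/16, by norm_num, max 4 (⌈Real.exp (Real.exp 20)⌉₊ + 1), by positivity, ?_⟩
  intro m hm
  have hm4 : 4 ≤ m := le_trans (le_max_left _ _) hm
  have hmc : ⌈Real.exp (Real.exp 20)⌉₊ + 1 ≤ m := le_trans (le_max_right _ _) hm
  have hm2μ : 2*m ≤ μ*m := Nat.mul_le_mul_right m hμ
  set h := m / 2 with hh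
  set ℓ := m - h with hℓ
  set a := μ*m - m with ha
  set b := μ*m - h - 1 with hb
  have hab : a - 1 ≤ b := by omega
  have hb_eq : b = (a-1) + ℓ := by omega
  set P := (ℓ+1).primesBelow with hPdef
  have hPprime : ∀ p ∈ P, Nat.Prime p := fun p hp => (Nat.mem_primesBelow.mp hp).2
  -- Natural number chain
  have hnat : (h+1) * (∑ p ∈ P, ℓ/p) ≤ ∑ s ∈ Finset.Icc 1 m, (s + 1) * Delta (μ * m - s) := by
    have step1 : ∑ s ∈ Finset.Icc (h+1) m, (s + 1) * Delta (μ * m - s)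
        ≤ ∑ s ∈ Finset.Icc 1 m, (s + 1) * Delta (μ * m - s) :=
      Finset.sum_le_sum_of_subset (Finset.Icc_subset_Icc (by omega) le_rfl)
    have step2 : (h+1) * (∑ s ∈ Finset.Icc (h+1) m, Delta (μ * m - s))
        ≤ ∑ s ∈ Finset.Icc (h+1) m, (s + 1) * Delta (μ * m - s) := by
      rw [Finset.mul_sum]
      apply Finset.sum_le_sum
      intro s hs
      exact Nat.mul_le_mul_right _ (by have := (Finset.mem_Icc.mp hs).1; omega)
    have step3 : ∑ s ∈ Finset.Icc (h+1) m, Delta (μ * m - s)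
        = ∑ n ∈ Finset.Ioc (a-1) b, Delta n := by
      apply Finset.sum_nbij' (i := fun s => μ*m - s) (j := fun n => μ*m - n)
      · intro s hs
        rw [Finset.mem_Icc] at hs
        rw [Finset.mem_Ioc]
        omega
      · intro n hn
        rw [Finset.mem_Ioc] at hn
        rw [Finset.mem_Icc]
        omega
      · intro s hs
        rw [Finset.mem_Icc] at hs
        omega
      · intro n hn
        rw [Finset.mem_Ioc] at hn
        omega
      · intro s _
        rfl
    have step4 : ∑ p ∈ P, (b/p - (a-1)/p) ≤ ∑ n ∈ Finset.Ioc (a-1) b, Delta n :=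
      sum_Delta_lower _ _ hab P hPprime
    have step5 : ∑ p ∈ P, ℓ/p ≤ ∑ p ∈ P, (b/p - (a-1)/p) := by
      apply Finset.sum_le_sum
      intro p hp
      have hp0 : 0 < p := (hPprime p hp).pos
      have hdiv : (a-1)/p + ℓ/p ≤ b/p := by
        rw [hb_eq, Nat.le_div_iff_mul_le hp0, add_mul]
        exact Nat.add_le_add (Nat.div_mul_le_self _ _) (Nat.div_mul_le_self _ _)
      omega
    calc (h+1) * (∑ p ∈ P, ℓ/p) ≤ (h+1) * ∑ p ∈ P, (b/p - (a-1)/p) :=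
          Nat.mul_le_mul_left _ step5
      _ ≤ (h+1) * ∑ n ∈ Finset.Ioc (a-1) b, Delta n := Nat.mul_le_mul_left _ step4
      _ = (h+1) * ∑ s ∈ Finset.Icc (h+1) m, Delta (μ * m - s) := by rw [step3]
      _ ≤ ∑ s ∈ Finset.Icc (h+1) m, (s + 1) * Delta (μ * m - s) := step2
      _ ≤ _ := step1
  -- Move to ℝ
  have hcast : ((h:ℝ)+1) * (∑ p ∈ P, ((ℓ/p : ℕ):ℝ))
      ≤ ((∑ s ∈ Finset.Icc 1 m, (s + 1) * Delta (μ * m - s) : ℕ) : ℝ) := by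
    have h' := (Nat.cast_le (α := ℝ)).mpr hnat
    push_cast at h' ⊢
    exact h'
  -- real facts
  have hx4 : (4:ℝ) ≤ (m:ℝ) := by exact_mod_cast hm4
  have hxe : Real.exp (Real.exp 20) ≤ (m:ℝ) := by
    have h1 : Real.exp (Real.exp 20) ≤ (⌈Real.exp (Real.exp 20)⌉₊ : ℝ) := Nat.le_ceil _
    have h2 : ((⌈Real.exp (Real.exp 20)⌉₊ : ℕ) : ℝ) ≤ (m:ℝ) := by
      exact_mod_cast (by omega : ⌈Real.exp (Real.exp 20)⌉₊ ≤ m)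
    linarith
  have hxpos : (0:ℝ) < (m:ℝ) := by linarith
  have hlogx : Real.exp 20 ≤ Real.log (m:ℝ) :=
    (Real.le_log_iff_exp_le hxpos).mpr hxe
  have hlogxpos : (0:ℝ) < Real.log (m:ℝ) := lt_of_lt_of_le (Real.exp_pos 20) hlogx
  have hX : (20:ℝ) ≤ Real.log (Real.log (m:ℝ)) :=
    (Real.le_log_iff_exp_le hlogxpos).mpr hlogx
  set X := Real.log (Real.log (m:ℝ)) with hXdef
  have hlog2 : Real.log 2 ≤ 1 := by
    have := Real.log_le_sub_one_of_pos (x := 2) (by norm_num); linarith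
  -- sizes
  have hA : (m:ℝ)/2 ≤ (h:ℝ)+1 := by
    have h1 : m ≤ 2*(h+1) := by omega
    have h2 : ((m:ℕ):ℝ) ≤ ((2*(h+1) : ℕ):ℝ) := by exact_mod_cast h1
    push_cast at h2
    linarith
  have hB : (m:ℝ)/2 ≤ (ℓ:ℝ) := by
    have h1 : m ≤ 2*ℓ := by omega
    have h2 : ((m:ℕ):ℝ) ≤ ((2*ℓ : ℕ):ℝ) := by exact_mod_cast h1
    push_cast at h2
    linarith
  have hB1 : (ℓ:ℝ)+1 ≤ (m:ℝ) := by
    have h1 : ℓ + 1 ≤ m := by omega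
    have h2 : ((ℓ+1 : ℕ):ℝ) ≤ ((m:ℕ):ℝ) := by exact_mod_cast h1
    push_cast at h2
    linarith
  -- Mertens applied with N = ℓ
  have hℓ1 : 1 ≤ ℓ := by omega
  have hmert := mertens_lower ℓ hℓ1
  -- log log (ℓ+1) ≥ (3/4) X
  have hL : (3/4)*X ≤ Real.log (Real.log ((ℓ:ℝ)+1)) := by
    have hl1 : (m:ℝ)/2 ≤ (ℓ:ℝ)+1 := by linarith
    have hlogl : (1/2)*Real.log (m:ℝ) ≤ Real.log ((ℓ:ℝ)+1) := by
      have h1 : Real.log ((m:ℝ)/2) ≤ Real.log ((ℓ:ℝ)+1) :=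
        Real.log_le_log (by linarith) hl1
      have h2 : Real.log ((m:ℝ)/2) = Real.log (m:ℝ) - Real.log 2 :=
        Real.log_div (by linarith) (by norm_num)
      have hlx : (2:ℝ) ≤ Real.log (m:ℝ) := by
        have := Real.add_one_le_exp (20:ℝ); linarith
      linarith
    have hhalfpos : (0:ℝ) < (1/2)*Real.log (m:ℝ) := by linarith
    have h3 : Real.log ((1/2)*Real.log (m:ℝ)) ≤ Real.log (Real.log ((ℓ:ℝ)+1)) :=
      Real.log_le_log hhalfpos hlogl
    have h4 : Real.log ((1/2)*Real.log (m:ℝ))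
        = Real.log (1/2) + Real.log (Real.log (m:ℝ)) := by
      rw [Real.log_mul (by norm_num) (ne_of_gt hlogxpos)]
    have h5 : Real.log (1/2) = - Real.log 2 := by
      rw [one_div, Real.log_inv]
    rw [h4, h5] at h3
    linarith
  -- per prime bounds
  have hsum1 : ∑ p ∈ P, ((ℓ:ℝ)/p - 1) ≤ ∑ p ∈ P, ((ℓ/p : ℕ):ℝ) := by
    apply Finset.sum_le_sum
    intro p hp
    have hp2 : (2:ℝ) ≤ p := by exact_mod_cast (hPprime p hp).two_le
    have hmod := Nat.div_add_mod ℓ p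
    have hmodlt : ℓ % p < p := Nat.mod_lt _ (hPprime p hp).pos
    have hcast1 : (p:ℝ) * ((ℓ/p : ℕ):ℝ) + ((ℓ % p : ℕ):ℝ) = (ℓ:ℝ) := by
      exact_mod_cast hmod
    have hmodlt' : ((ℓ % p : ℕ):ℝ) < (p:ℝ) := by exact_mod_cast hmodlt
    rw [div_sub_one (by linarith), div_le_iff₀ (by linarith)]
    nlinarith [Nat.cast_nonneg (α := ℝ) (ℓ % p)]
  have hsum2 : (ℓ:ℝ)/2 * (∑ p ∈ P, 2/(p:ℝ)) - (P.card : ℝ) = ∑ p ∈ P, ((ℓ:ℝ)/p - 1) := by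
    rw [Finset.sum_sub_distrib, Finset.mul_sum]
    congr 1
    · apply Finset.sum_congr rfl
      intro p hp
      have hp2 : (2:ℝ) ≤ p := by exact_mod_cast (hPprime p hp).two_le
      field_simp
    · simp
  have hcard : (P.card : ℝ) ≤ (ℓ:ℝ) + 1 := by
    have h1 : P.card ≤ ℓ + 1 := by
      calc P.card ≤ (Finset.range (ℓ+1)).card :=
            Finset.card_le_card (fun p hp => Finset.mem_range.mpr (Nat.mem_primesBelow.mp hp).1)
        _ = ℓ + 1 := Finset.card_range _
    exact_mod_cast h1
  have hmertx : (3/4)*X ≤ ∑ p ∈ P, 2/(p:ℝ) := le_trans hL (le_trans (le_of_eq rfl) hmert)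
  have hl0 : (0:ℝ) ≤ (ℓ:ℝ)/2 := by positivity
  have hsumfinal : (ℓ:ℝ)/2 * ((3/4)*X) - ((ℓ:ℝ)+1) ≤ ∑ p ∈ P, ((ℓ/p : ℕ):ℝ) := by
    have h1 := mul_le_mul_of_nonneg_left hmertx hl0
    linarith [hsum1, hsum2.le, hsum2.ge]
  have hApos : (0:ℝ) ≤ (h:ℝ)+1 := by positivity
  have hXpos : (0:ℝ) ≤ X := by linarith
  have hinner : (m:ℝ)*X/8 ≤ (ℓ:ℝ)/2 * ((3/4)*X) - ((ℓ:ℝ)+1) := by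
    have hkey := mul_le_mul_of_nonneg_right hB (show (0:ℝ) ≤ 3/8*X by linarith)
    have hmX : (m:ℝ)*16 ≤ (m:ℝ)*X :=
      mul_le_mul_of_nonneg_left (show (16:ℝ) ≤ X by linarith) (le_of_lt hxpos)
    nlinarith [hkey, hmX, hB1]
  have hAX : (0:ℝ) ≤ (m:ℝ)*X/8 := by positivity
  calc (1/16) * (m:ℝ)^2 * X = ((m:ℝ)/2) * ((m:ℝ)*X/8) := by ring
    _ ≤ ((h:ℝ)+1) * ((m:ℝ)*X/8) := mul_le_mul_of_nonneg_right hA hAX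
    _ ≤ ((h:ℝ)+1) * ((ℓ:ℝ)/2 * ((3/4)*X) - ((ℓ:ℝ)+1)) := mul_le_mul_of_nonneg_left hinner hApos
    _ ≤ ((h:ℝ)+1) * (∑ p ∈ P, ((ℓ/p : ℕ):ℝ)) := mul_le_mul_of_nonneg_left hsumfinal hApos
    _ ≤ _ := hcast
end

section
/- For every integer μ ≥ 2 there exist a constant c > 0 and a positive integer M such that for every integer m ≥ M there exists s₀ ∈ {1, 2, …, m} with (s₀ + 1) · Δ(μm − s₀) ≥ c · m · ln(ln m). -/
lemma delta_ge_of_two_pow_dvd {n k : ℕ} (h : 2 ^ k ∣ n) (hn : n ≠ 0) :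
    k ≤ Delta n := by
  have h1 : k ≤ n.factorization 2 :=
    (Nat.Prime.pow_dvd_iff_le_factorization Nat.prime_two hn).mp h
  have h2 : n.factorization 2 = n.primeFactorsList.count 2 :=
    Nat.primeFactorsList_count_eq.symm
  have h3 : n.primeFactorsList.count 2 ≤ n.primeFactorsList.length :=
    List.count_le_length
  unfold Delta; omega

lemma ceil_div_ge (a q : ℕ) (hq : 0 < q) : a ≤ q * ((a + q - 1) / q) := by
  have e := Nat.div_add_mod (a + q - 1) q
  have h1 : (a + q - 1) % q < q := Nat.mod_lt _ hq
  omega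

/-- For every integer `μ ≥ 2` there are `c > 0` and `M` such that for all `m ≥ M`
there exists `s₀ ∈ {1, …, m}` with `(s₀+1) Δ(μm − s₀) ≥ c m ln (ln m)`. -/
theorem exists_good_s (μ : ℕ) (hμ : 2 ≤ μ) :
    ∃ c : ℝ, 0 < c ∧ ∃ M : ℕ, 0 < M ∧ ∀ m : ℕ, M ≤ m →
      ∃ s₀ ∈ Finset.Icc 1 m,
        (((s₀ + 1) * Delta (μ * m - s₀) : ℕ) : ℝ)
          ≥ c * (m : ℝ) * Real.log (Real.log m) := by
  refine ⟨1/4, by norm_num, 32, by norm_num, fun m hm => ?_⟩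
  have hm0 : m ≠ 0 := by omega
  set L := Nat.log 2 m with hLdef
  have hL5 : 5 ≤ L := by
    rw [hLdef]
    exact (Nat.le_log_iff_pow_le (by norm_num) hm0).mpr (by norm_num; omega)
  set k := L - 1 with hkdef
  set q := 2 ^ k with hqdef
  have hq_pos : 0 < q := Nat.pow_pos (by norm_num)
  have h2q : 2 * q ≤ m := by
    have h1 : 2 ^ L ≤ m := Nat.pow_log_le_self 2 hm0
    have h2 : 2 * q = 2 ^ L := by
      rw [hqdef, hkdef, ← pow_succ']
      congr 1
      omega
    omega
  have hmμ : 2 * m ≤ μ * m := Nat.mul_le_mul_right m hμ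
  set a := μ * m - m with hadef
  obtain ⟨N, hNdvd, hN1, hN2⟩ : ∃ N, q ∣ N ∧ a ≤ N ∧ N ≤ a + q - 1 :=
    ⟨q * ((a + q - 1) / q), ⟨_, rfl⟩, ceil_div_ge a q hq_pos,
      by rw [mul_comm]; exact Nat.div_mul_le_self _ _⟩
  have hN0 : N ≠ 0 := by omega
  set s₀ := μ * m - N with hs₀def
  have hs₀1 : 1 ≤ s₀ := by omega
  have hs₀m : s₀ ≤ m := by omega
  have hsub : μ * m - s₀ = N := by omega
  refine ⟨s₀, Finset.mem_Icc.mpr ⟨hs₀1, hs₀m⟩, ?_⟩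
  rw [hsub]
  have hΔ : k ≤ Delta N := delta_ge_of_two_pow_dvd hNdvd hN0
  -- real estimates
  have hlog2 : (0.6931471803 : ℝ) < Real.log 2 := Real.log_two_gt_d9
  have hlogm3 : (3 : ℝ) ≤ Real.log m := by
    have h32 : (32 : ℝ) ≤ m := by exact_mod_cast hm
    have : Real.log 32 ≤ Real.log m := Real.log_le_log (by norm_num) h32
    have h32e : Real.log 32 = 5 * Real.log 2 := by
      rw [show (32 : ℝ) = 2 ^ 5 by norm_num, Real.log_pow]
      push_cast; ring
    nlinarith
  have hk_ge : Real.log m - 2 ≤ (k : ℝ) := by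
    have h1 : m < 2 ^ (L + 1) := Nat.lt_pow_succ_log_self (by norm_num) m
    have h2 : (m : ℝ) < 2 ^ (L + 1) := by exact_mod_cast h1
    have h3 : Real.log m < (L + 1) * Real.log 2 := by
      calc Real.log m < Real.log (2 ^ (L + 1)) :=
            Real.log_lt_log (by positivity) h2
        _ = (L + 1) * Real.log 2 := by rw [Real.log_pow]; push_cast; ring
    have hlog2lt1 : Real.log 2 < 1 := by
      have := Real.log_two_lt_d9
      linarith
    have h4 : Real.log m < (L : ℝ) + 1 := by
      have hL0 : (0 : ℝ) ≤ (L : ℝ) + 1 := by positivity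
      nlinarith
    have hkL : (k : ℝ) = (L : ℝ) - 1 := by
      rw [hkdef]; push_cast [Nat.cast_sub (by omega : 1 ≤ L)]; ring
    linarith
  have hs_ge : (m : ℝ) / 2 ≤ ((s₀ : ℝ) + 1) := by
    have : m ≤ 2 * (s₀ + 1) := by omega
    have : (m : ℝ) ≤ 2 * ((s₀ : ℝ) + 1) := by exact_mod_cast this
    linarith
  have hll : Real.log (Real.log m) ≤ Real.log m - 1 :=
    Real.log_le_sub_one_of_pos (by linarith)
  have hmR : (0 : ℝ) ≤ m := by positivity
  have hΔR : (k : ℝ) ≤ (Delta N : ℝ) := by exact_mod_cast hΔ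
  have hprod : (m : ℝ) / 2 * (Real.log m - 2) ≤ ((s₀ : ℝ) + 1) * (Delta N : ℝ) := by
    have h1 : (0 : ℝ) ≤ Real.log m - 2 := by linarith
    have h2 : (0 : ℝ) ≤ (m : ℝ) / 2 := by positivity
    have := mul_le_mul hs_ge (le_trans hk_ge hΔR) h1 (by linarith)
    linarith
  have hcast : (((s₀ + 1) * Delta N : ℕ) : ℝ) = ((s₀ : ℝ) + 1) * (Delta N : ℝ) := by
    push_cast; ring
  rw [ge_iff_le, hcast]
  calc 1/4 * (m : ℝ) * Real.log (Real.log m)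
      ≤ 1/4 * (m : ℝ) * (Real.log m - 1) := by nlinarith
    _ ≤ (m : ℝ) / 2 * (Real.log m - 2) := by nlinarith
    _ ≤ ((s₀ : ℝ) + 1) * (Delta N : ℝ) := hprod
end

section
/- For every integer μ ≥ 2, every real β > 0, and every real ε > 0, there exists a positive integer M such that for every integer m ≥ M, ∑ over those s ∈ {1, 2, …, m} with ν₂(μm − s) > β · ln(ln m) of (s + 1) · Δ(μm − s) is at most ε · m² · ln(ln m). -/
open Finset Filter Real

set_option maxHeartbeats 1000000

lemma Delta_eq_sum (n : ℕ) : n.primeFactorsList.length = ∑ p ∈ n.primeFactors, n.factorization p := by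
  conv_lhs => rw [← Multiset.coe_card (n.primeFactorsList)]
  rw [← Multiset.toFinset_sum_count_eq]
  apply Finset.sum_congr
  · rw [Nat.primeFactors]; exact List.toFinset_coe _
  · intro p _
    rw [Nat.factorization_eq_primeFactorsList_multiset, Multiset.toFinsupp_apply]

lemma count_dvd (μ m d : ℕ) (hμ : 1 ≤ μ) (hd : 0 < d) :
    ((Finset.Icc 1 m).filter (fun s => d ∣ (μ * m - s))).card ≤ m / d + 2 := by
  classical
  have : ((Finset.Icc 1 m).filter (fun s => d ∣ (μ * m - s))).card
      ≤ (Finset.Icc ((μ * m - m) / d) ((μ * m) / d)).card := by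
    apply Finset.card_le_card_of_injOn (fun s => (μ * m - s) / d)
    · intro s hs
      simp only [Finset.mem_coe, mem_filter, mem_Icc] at hs ⊢
      exact ⟨Nat.div_le_div_right (by omega), Nat.div_le_div_right (by omega)⟩
    · intro s hs t ht hst
      simp only [coe_filter, Set.mem_setOf_eq, mem_Icc] at hs ht
      simp only at hst
      have h1 : d * ((μ * m - s) / d) = μ * m - s := Nat.mul_div_cancel' hs.2
      have h2 : d * ((μ * m - t) / d) = μ * m - t := Nat.mul_div_cancel' ht.2
      have key : μ * m - s = μ * m - t := by rw [← h1, ← h2, hst]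
      have hs' : s ≤ μ * m := le_trans hs.1.2 (Nat.le_mul_of_pos_left m hμ)
      have ht' : t ≤ μ * m := le_trans ht.1.2 (Nat.le_mul_of_pos_left m hμ)
      omega
  refine this.trans ?_
  rw [Nat.card_Icc]
  have heq : μ * m - m + m = μ * m := by
    have : m ≤ μ * m := Nat.le_mul_of_pos_left m hμ
    omega
  have h3 : μ * m / d ≤ (μ * m - m) / d + m / d + 1 := by
    conv_lhs => rw [← heq]
    rw [Nat.add_div hd]
    split_ifs <;> omega
  exact Nat.sub_le_iff_le_add.mpr (by omega)
lemma delta_le_sum (n N : ℕ) (h1 : 1 ≤ n) (hN : n ≤ N) :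
    n.primeFactorsList.length ≤
      ∑ p ∈ Nat.primesBelow (N + 1), ∑ j ∈ Finset.Icc 1 (Nat.log p N),
        (if p ^ j ∣ n then 1 else 0) := by
  rw [Delta_eq_sum]
  have hsub : n.primeFactors ⊆ Nat.primesBelow (N + 1) := by
    intro p hp
    rw [Nat.mem_primesBelow]
    have hpn : p ∣ n := Nat.dvd_of_mem_primeFactors hp
    exact ⟨lt_of_le_of_lt (le_trans (Nat.le_of_dvd (by omega) hpn) hN) (Nat.lt_succ_self N),
      Nat.prime_of_mem_primeFactors hp⟩
  refine le_trans ?_ (Finset.sum_le_sum_of_subset_of_nonneg hsub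
    (fun _ _ _ => Finset.sum_nonneg fun _ _ => by positivity))
  apply Finset.sum_le_sum
  intro p hp
  have hp' : p.Prime := Nat.prime_of_mem_primeFactors hp
  have hn0 : n ≠ 0 := by omega
  -- factorization p ≤ Nat.log p N
  have hle : n.factorization p ≤ Nat.log p N := by
    have hdvd : p ^ n.factorization p ∣ n := Nat.ordProj_dvd n p
    have hple : p ^ n.factorization p ≤ N := le_trans (Nat.le_of_dvd (by omega) hdvd) hN
    exact (Nat.le_log_iff_pow_le hp'.one_lt (by omega)).mpr hple
  calc n.factorization p = ∑ j ∈ Finset.Icc 1 (n.factorization p), 1 := by simp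
    _ ≤ _ := by
        refine le_trans (le_of_eq ?_) (Finset.sum_le_sum_of_subset_of_nonneg
          (Finset.Icc_subset_Icc_right hle) (fun _ _ _ => by positivity))
        apply Finset.sum_congr rfl
        intro j hj
        simp only [mem_Icc] at hj
        rw [if_pos ((Nat.Prime.pow_dvd_iff_le_factorization hp' hn0).mpr hj.2)]

lemma card_pairs (N : ℕ) (hN : 1 ≤ N) :
    ∑ p ∈ Nat.primesBelow (N + 1), Nat.log p N ≤ N := by
  classical
  have : ∑ p ∈ Nat.primesBelow (N + 1), Nat.log p N
      = ((Nat.primesBelow (N + 1)).sigma (fun p => Finset.Icc 1 (Nat.log p N))).card := by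
    rw [Finset.card_sigma]
    apply Finset.sum_congr rfl
    intro p _
    rw [Nat.card_Icc]
    omega
  rw [this]
  have h2 : ((Nat.primesBelow (N + 1)).sigma (fun p => Finset.Icc 1 (Nat.log p N))).card
      ≤ (Finset.Icc 2 N).card := by
    apply Finset.card_le_card_of_injOn (fun x => x.1 ^ x.2)
    · rintro ⟨p, j⟩ hx
      simp only [Finset.mem_coe, Finset.mem_sigma, Nat.mem_primesBelow, mem_Icc] at hx ⊢
      obtain ⟨⟨hpN, hp⟩, hj1, hjlog⟩ := hx
      constructor
      · refine le_trans hp.two_le ?_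
        calc p = p ^ 1 := (pow_one p).symm
          _ ≤ p ^ j := Nat.pow_le_pow_right hp.one_lt.le hj1
      · calc p ^ j ≤ p ^ Nat.log p N := Nat.pow_le_pow_right hp.one_lt.le hjlog
          _ ≤ N := Nat.pow_log_le_self p (by omega)
    · rintro ⟨p, j⟩ hx ⟨q, i⟩ hy hxy
      simp only [Finset.coe_sigma, Set.mem_sigma_iff, Finset.mem_coe, Nat.mem_primesBelow,
        mem_Icc] at hx hy
      simp only at hxy
      obtain ⟨⟨_, hp⟩, hj⟩ := hx
      obtain ⟨⟨_, hq⟩, hi⟩ := hy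
      have hpq : p = q := by
        have h1 : p ∣ q ^ i := hxy ▸ dvd_pow_self p (by omega : j ≠ 0)
        have := (Nat.Prime.dvd_of_dvd_pow hp h1)
        exact ((Nat.prime_dvd_prime_iff_eq hp hq).mp this)
      subst hpq
      have : j = i := Nat.pow_right_injective hp.two_le hxy
      simp [this]
  refine h2.trans ?_
  rw [Nat.card_Icc]
  omega
lemma block_card (i : ℕ) :
    i * ((Finset.Ico (2^i) (2^(i+1))).filter Nat.Prime).card ≤ 2^(i+2) := by
  set B := (Finset.Ico (2^i) (2^(i+1))).filter Nat.Prime with hB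
  have hprod1 : (2^i) ^ B.card ≤ ∏ p ∈ B, p := by
    apply Finset.pow_card_le_prod
    intro p hp
    rw [hB, mem_filter, mem_Ico] at hp
    exact hp.1.1
  have hprod2 : ∏ p ∈ B, p ≤ primorial (2^(i+1) - 1) := by
    rw [primorial]
    apply Finset.prod_le_prod_of_subset_of_one_le'
    · intro p hp
      rw [hB, mem_filter, mem_Ico] at hp
      rw [mem_filter, mem_range]
      have h2 : 0 < 2^(i+1) := Nat.pow_pos (by norm_num)
      exact ⟨by omega, hp.2⟩
    · intro p hp _
      rw [mem_filter] at hp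
      exact hp.2.one_lt.le
  have hprim : primorial (2^(i+1) - 1) ≤ 4 ^ (2^(i+1) - 1) := primorial_le_4_pow _
  have hchain : (2:ℕ) ^ (i * B.card) ≤ 2 ^ (2^(i+2)) := by
    calc (2:ℕ) ^ (i * B.card) = (2^i) ^ B.card := by rw [pow_mul]
      _ ≤ primorial (2^(i+1) - 1) := le_trans hprod1 hprod2
      _ ≤ 4 ^ (2^(i+1) - 1) := hprim
      _ ≤ 4 ^ (2^(i+1)) := Nat.pow_le_pow_right (by norm_num) (Nat.sub_le _ _)
      _ = 2 ^ (2^(i+2)) := by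
          rw [(by norm_num : (4:ℕ) = 2^2), ← pow_mul]
          congr 1
          ring
  exact (Nat.pow_le_pow_iff_right (by norm_num)).mp hchain

lemma sum_primes_inv (X : ℕ) (hX : 2 ≤ X) :
    ∑ p ∈ X.primesBelow, ((p : ℝ))⁻¹ ≤ 4 + 4 * Real.log (Nat.log 2 X) := by
  set L := Nat.log 2 X with hL
  have hL1 : 1 ≤ L := Nat.log_pos (by norm_num) hX
  have hXlt : X < 2 ^ (L + 1) := Nat.lt_pow_succ_log_self (by norm_num) X
  have hsub : X.primesBelow ⊆ (Finset.Icc 1 L).biUnion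
      (fun i => (Finset.Ico (2^i) (2^(i+1))).filter Nat.Prime) := by
    intro p hp
    rw [Nat.mem_primesBelow] at hp
    obtain ⟨hpX, hp⟩ := hp
    rw [Finset.mem_biUnion]
    refine ⟨Nat.log 2 p, ?_, ?_⟩
    · rw [mem_Icc]
      exact ⟨Nat.log_pos (by norm_num) hp.two_le, Nat.log_mono_right (by omega)⟩
    · rw [mem_filter, mem_Ico]
      exact ⟨⟨Nat.pow_log_le_self 2 hp.pos.ne', Nat.lt_pow_succ_log_self (by norm_num) p⟩, hp⟩
  have hdisj : (↑(Finset.Icc 1 L) : Set ℕ).PairwiseDisjoint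
      (fun i => (Finset.Ico (2^i) (2^(i+1))).filter Nat.Prime) := by
    intro i _ j _ hij
    apply Finset.disjoint_filter_filter
    rw [Finset.disjoint_left]
    intro a ha hb
    rw [mem_Ico] at ha hb
    rcases lt_or_gt_of_ne hij with h | h
    · have : (2:ℕ)^(i+1) ≤ 2^j := Nat.pow_le_pow_right (by norm_num) h
      omega
    · have : (2:ℕ)^(j+1) ≤ 2^i := Nat.pow_le_pow_right (by norm_num) h
      omega
  calc ∑ p ∈ X.primesBelow, ((p : ℝ))⁻¹
      ≤ ∑ p ∈ (Finset.Icc 1 L).biUnion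
          (fun i => (Finset.Ico (2^i) (2^(i+1))).filter Nat.Prime), ((p : ℝ))⁻¹ :=
        Finset.sum_le_sum_of_subset_of_nonneg hsub (fun k _ _ => by positivity)
    _ = ∑ i ∈ Finset.Icc 1 L, ∑ p ∈ (Finset.Ico (2^i) (2^(i+1))).filter Nat.Prime, ((p:ℝ))⁻¹ :=
        Finset.sum_biUnion hdisj
    _ ≤ ∑ i ∈ Finset.Icc 1 L, 4 * ((i : ℝ))⁻¹ := by
        apply Finset.sum_le_sum
        intro i hi
        rw [mem_Icc] at hi
        have hi1 : (1:ℝ) ≤ i := by exact_mod_cast hi.1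
        have hcard := block_card i
        set B := (Finset.Ico (2^i) (2^(i+1))).filter Nat.Prime with hB
        have h1 : ∑ p ∈ B, ((p:ℝ))⁻¹ ≤ B.card * ((2^i : ℝ))⁻¹ := by
          have := Finset.sum_le_card_nsmul B (fun p => ((p:ℝ))⁻¹) ((2^i : ℝ))⁻¹ ?_
          · rw [nsmul_eq_mul] at this; exact this
          intro p hp
          rw [hB, mem_filter, mem_Ico] at hp
          have : (2^i : ℝ) ≤ p := by exact_mod_cast hp.1.1
          have h2 : (0:ℝ) < 2^i := by positivity
          exact inv_anti₀ h2 this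
        refine h1.trans ?_
        have hcR : (B.card : ℝ) * i ≤ 2^(i+2) := by
          have : ((i * B.card : ℕ) : ℝ) ≤ ((2^(i+2) : ℕ) : ℝ) := by exact_mod_cast hcard
          push_cast at this
          linarith
        have hipos : (0:ℝ) < i := by linarith
        have h2pos : (0:ℝ) < 2^i := by positivity
        rw [mul_inv_le_iff₀' h2pos]
        have h4 : (2:ℝ)^i * (4 * (i:ℝ)⁻¹) = 2^(i+2) * (i:ℝ)⁻¹ := by
          rw [pow_add]; ring
        rw [h4, ← div_eq_mul_inv, le_div_iff₀ hipos]
        exact hcR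
    _ = 4 * ∑ i ∈ Finset.Icc 1 L, ((i : ℝ))⁻¹ := by rw [Finset.mul_sum]
    _ ≤ 4 * (1 + Real.log L) := by
        have : ∑ i ∈ Finset.Icc 1 L, ((i : ℝ))⁻¹ = ((harmonic L : ℚ) : ℝ) := by
          rw [harmonic_eq_sum_Icc]
          push_cast
          rfl
        rw [this]
        have := harmonic_le_one_add_log L
        linarith
    _ ≤ 4 + 4 * Real.log L := by ring_nf; rfl
lemma geom_inv_sum (p J : ℕ) (hp : 2 ≤ p) :
    ∑ j ∈ Finset.Icc 1 J, ((p : ℝ) ^ j)⁻¹ ≤ 2 / p := by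
  have hp0 : (0:ℝ) < p := by positivity
  have step : ∀ j ∈ Finset.Icc 1 J, ((p : ℝ) ^ j)⁻¹ ≤ (p:ℝ)⁻¹ * (1/2) ^ (j - 1) := by
    intro j hj
    rw [mem_Icc] at hj
    have h1 : (p:ℝ) * 2 ^ (j-1) ≤ (p:ℝ)^j := by
      calc (p:ℝ) * 2^(j-1) ≤ (p:ℝ) * (p:ℝ)^(j-1) := by
            apply mul_le_mul_of_nonneg_left _ hp0.le
            apply pow_le_pow_left₀ (by norm_num)
            exact_mod_cast hp
        _ = (p:ℝ)^(j-1+1) := by ring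
        _ = (p:ℝ)^j := by congr 1; omega
    have h2 : (0:ℝ) < (p:ℝ) * 2 ^ (j-1) := by positivity
    calc ((p:ℝ)^j)⁻¹ ≤ ((p:ℝ) * 2^(j-1))⁻¹ := inv_anti₀ h2 h1
      _ = (p:ℝ)⁻¹ * (1/2)^(j-1) := by
          rw [mul_inv]
          congr 1
          rw [one_div, inv_pow]
  calc ∑ j ∈ Finset.Icc 1 J, ((p : ℝ) ^ j)⁻¹
      ≤ ∑ j ∈ Finset.Icc 1 J, (p:ℝ)⁻¹ * (1/2) ^ (j - 1) := Finset.sum_le_sum step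
    _ = (p:ℝ)⁻¹ * ∑ j ∈ Finset.Icc 1 J, ((1:ℝ)/2) ^ (j - 1) := by rw [Finset.mul_sum]
    _ ≤ (p:ℝ)⁻¹ * 2 := by
        apply mul_le_mul_of_nonneg_left _ (by positivity)
        rw [← Finset.Ico_add_one_right_eq_Icc, Finset.sum_Ico_eq_sum_range]
        calc ∑ i ∈ Finset.range (J + 1 - 1), ((1:ℝ)/2) ^ (1 + i - 1)
            = ∑ i ∈ Finset.range (J + 1 - 1), ((1:ℝ)/2) ^ i := by
              apply Finset.sum_congr rfl; intro i _; congr 1; omega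
          _ ≤ 2 := sum_geometric_two_le _
    _ = 2 / p := by rw [div_eq_mul_inv]; ring

lemma even_split (K mm J : ℕ) :
    ∑ j ∈ Finset.Icc 1 J, (mm:ℝ)/2^(max j K) ≤ (K+1) * mm / 2^K := by
  have hnn : ∀ j, (0:ℝ) ≤ (mm:ℝ)/2^(max j K) := fun j => by positivity
  set Mx := max J K with hMx
  calc ∑ j ∈ Finset.Icc 1 J, (mm:ℝ)/2^(max j K)
      ≤ ∑ j ∈ Finset.Icc 1 Mx, (mm:ℝ)/2^(max j K) := by
        apply Finset.sum_le_sum_of_subset_of_nonneg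
        · exact Finset.Icc_subset_Icc_right (le_max_left _ _)
        · intro j _ _; exact hnn j
    _ = ∑ j ∈ Finset.Ioc 0 K, (mm:ℝ)/2^(max j K) + ∑ j ∈ Finset.Ioc K Mx, (mm:ℝ)/2^(max j K) := by
        rw [show Finset.Icc 1 Mx = Finset.Ioc 0 Mx by
          ext x; simp only [mem_Icc, mem_Ioc]; omega]
        exact (Finset.sum_Ioc_consecutive _ (Nat.zero_le K) (le_max_right J K)).symm
    _ ≤ K * ((mm:ℝ)/2^K) + (mm:ℝ)/2^K := by
        apply add_le_add
        · have : ∀ j ∈ Finset.Ioc 0 K, (mm:ℝ)/2^(max j K) = (mm:ℝ)/2^K := by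
            intro j hj
            rw [mem_Ioc] at hj
            rw [max_eq_right hj.2]
          rw [Finset.sum_congr rfl this, Finset.sum_const, Nat.card_Ioc, nsmul_eq_mul]
          simp
        · have h1 : ∀ j ∈ Finset.Ioc K Mx, (mm:ℝ)/2^(max j K) = (mm:ℝ) * (1/2)^j := by
            intro j hj
            rw [mem_Ioc] at hj
            rw [max_eq_left hj.1.le, div_eq_mul_inv, one_div, inv_pow]
          rw [Finset.sum_congr rfl h1, ← Finset.mul_sum]
          rw [div_eq_mul_inv]
          apply mul_le_mul_of_nonneg_left _ (by positivity)
          have : Finset.Ioc K Mx = Finset.Ico (K+1) (Mx+1) := by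
            ext x; simp only [mem_Ioc, mem_Ico]; omega
          rw [this, Finset.sum_Ico_eq_sum_range]
          calc ∑ i ∈ Finset.range (Mx + 1 - (K+1)), ((1:ℝ)/2) ^ (K + 1 + i)
              = (1/2)^(K+1) * ∑ i ∈ Finset.range (Mx + 1 - (K+1)), ((1:ℝ)/2) ^ i := by
                rw [Finset.mul_sum]
                apply Finset.sum_congr rfl
                intro i _
                rw [← pow_add]
            _ ≤ (1/2)^(K+1) * 2 := by
                apply mul_le_mul_of_nonneg_left (sum_geometric_two_le _) (by positivity)
            _ = ((2:ℝ)^K)⁻¹ := by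
                rw [one_div, inv_pow, pow_succ]
                rw [mul_inv]
                field_simp
    _ = (K+1) * mm / 2^K := by ring

/-- For every integer `μ ≥ 2`, `β > 0` and `ε > 0` there is `M` such that for all
`m ≥ M` the sum of `(s+1) Δ(μm − s)` over those `s ∈ {1, …, m}` with
`ν₂(μm − s) > β ln (ln m)` is at most `ε m² ln (ln m)`. -/
theorem sum_high_two_adic_small (μ : ℕ) (hμ : 2 ≤ μ) (β : ℝ) (hβ : 0 < β)
    (ε : ℝ) (hε : 0 < ε) :
    ∃ M : ℕ, 0 < M ∧ ∀ m : ℕ, M ≤ m →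
      ((∑ s ∈ (Finset.Icc 1 m).filter
          (fun s => (padicValNat 2 (μ * m - s) : ℝ) > β * Real.log (Real.log m)),
          (s + 1) * Delta (μ * m - s) : ℕ) : ℝ)
        ≤ ε * (m : ℝ) ^ 2 * Real.log (Real.log m) := by
  classical
  -- eventual conditions
  have hx_t : Tendsto (fun m : ℕ => Real.log (Real.log m)) atTop atTop :=
    (Real.tendsto_log_atTop.comp Real.tendsto_log_atTop).comp tendsto_natCast_atTop_atTop
  have hE_t : Tendsto (fun m : ℕ => Real.exp (Real.log 2 * (β * Real.log (Real.log m))))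
      atTop atTop := by
    apply Real.tendsto_exp_atTop.comp
    have hc : 0 < Real.log 2 * β := mul_pos (Real.log_pos (by norm_num)) hβ
    have : (fun m : ℕ => Real.log 2 * (β * Real.log (Real.log m)))
        = fun m : ℕ => (Real.log 2 * β) * Real.log (Real.log m) := by
      funext m; ring
    rw [this]
    exact (Filter.Tendsto.const_mul_atTop hc) hx_t
  have hev := ((hx_t.eventually_ge_atTop (max 1 (12*μ/ε))).and
    ((hE_t.eventually_ge_atTop (max (6*(β+2)/ε) (192/ε))).and
      (Filter.eventually_ge_atTop (μ+1)))).exists_forall_of_atTop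
  obtain ⟨M₀, hM₀⟩ := hev
  refine ⟨M₀ + 1, Nat.succ_pos _, ?_⟩
  intro m hm
  obtain ⟨hxA, hEA, hmA⟩ := hM₀ m (by omega)
  -- basic notations
  set x := Real.log (Real.log m) with hxdef
  have hx1 : (1:ℝ) ≤ x := le_trans (le_max_left _ _) hxA
  have hx2 : 12*μ/ε ≤ x := le_trans (le_max_right _ _) hxA
  set E := Real.exp (Real.log 2 * (β * x)) with hEdef
  have hE1 : 6*(β+2)/ε ≤ E := le_trans (le_max_left _ _) hEA
  have hE2 : 192/ε ≤ E := le_trans (le_max_right _ _) hEA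
  have hm3 : μ + 1 ≤ m := hmA
  have hm1 : 1 ≤ m := by omega
  have hmR : (1:ℝ) ≤ (m:ℝ) := by exact_mod_cast hm1
  set N := μ * m with hNdef
  have hN6 : 6 ≤ N := by
    have : 2 * 3 ≤ μ * m := Nat.mul_le_mul hμ (by omega)
    omega
  set K := Nat.floor (β * x) + 1 with hKdef
  have hβx0 : 0 ≤ β * x := by positivity
  have hKR : (K:ℝ) ≤ β * x + 1 := by
    rw [hKdef]
    push_cast
    have := Nat.floor_le hβx0
    linarith
  have hKgt : β * x < K := by
    rw [hKdef]
    push_cast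
    exact Nat.lt_floor_add_one _
  have hEle2K : E ≤ (2:ℝ)^K := by
    have h1 : E = (2:ℝ) ^ (β * x) := by
      rw [hEdef, Real.rpow_def_of_pos (by norm_num : (0:ℝ) < 2)]
    have h2 : ((2:ℝ):ℝ) ^ ((K:ℕ):ℝ) = (2:ℝ)^(K:ℕ) := Real.rpow_natCast 2 K
    rw [h1, ← h2]
    exact Real.rpow_le_rpow_of_exponent_le (by norm_num) hKgt.le
  have hEpos : (0:ℝ) < E := Real.exp_pos _
  have h2Kpos : (0:ℝ) < (2:ℝ)^K := by positivity
  -- the filter set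
  set F := (Finset.Icc 1 m).filter
      (fun s => (padicValNat 2 (μ * m - s) : ℝ) > β * Real.log (Real.log m)) with hFdef
  -- n_s basic facts
  have hns : ∀ s ∈ Finset.Icc 1 m, 1 ≤ μ * m - s ∧ μ * m - s ≤ N := by
    intro s hs
    rw [mem_Icc] at hs
    have h2m : 2 * m ≤ μ * m := Nat.mul_le_mul_right m hμ
    constructor <;> omega
  have hF2K : ∀ s ∈ F, 2^K ∣ (μ * m - s) := by
    intro s hs
    rw [hFdef, mem_filter] at hs
    have hv : K ≤ padicValNat 2 (μ * m - s) := by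
      have h1 : (Nat.floor (β * x) : ℝ) < (padicValNat 2 (μ * m - s) : ℝ) :=
        lt_of_le_of_lt (Nat.floor_le hβx0) hs.2
      have h2 : Nat.floor (β * x) < padicValNat 2 (μ * m - s) := by exact_mod_cast h1
      omega
    exact dvd_trans (pow_dvd_pow 2 hv) (pow_padicValNat_dvd)
  -- Step 1+2 : nat bound
  set PB := Nat.primesBelow (N + 1) with hPBdef
  have step12 : (∑ s ∈ F, (s + 1) * Delta (μ * m - s))
      ≤ (m + 1) * ∑ p ∈ PB, ∑ j ∈ Finset.Icc 1 (Nat.log p N),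
          ((F.filter (fun s => p ^ j ∣ (μ * m - s))).card) := by
    calc ∑ s ∈ F, (s + 1) * Delta (μ * m - s)
        ≤ ∑ s ∈ F, (m + 1) * Delta (μ * m - s) := by
          apply Finset.sum_le_sum
          intro s hs
          have hs' : s ∈ Finset.Icc 1 m := Finset.mem_of_mem_filter s hs
          rw [mem_Icc] at hs'
          exact Nat.mul_le_mul_right _ (by omega)
      _ = (m + 1) * ∑ s ∈ F, Delta (μ * m - s) := by rw [Finset.mul_sum]
      _ ≤ _ := by
          apply Nat.mul_le_mul_left
          calc ∑ s ∈ F, Delta (μ * m - s)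
              ≤ ∑ s ∈ F, ∑ p ∈ PB, ∑ j ∈ Finset.Icc 1 (Nat.log p N),
                  (if p ^ j ∣ (μ * m - s) then 1 else 0) := by
                apply Finset.sum_le_sum
                intro s hs
                have hs' := hns s (Finset.mem_of_mem_filter s hs)
                exact delta_le_sum _ N hs'.1 hs'.2
            _ = ∑ p ∈ PB, ∑ s ∈ F, ∑ j ∈ Finset.Icc 1 (Nat.log p N),
                  (if p ^ j ∣ (μ * m - s) then 1 else 0) := Finset.sum_comm
            _ = ∑ p ∈ PB, ∑ j ∈ Finset.Icc 1 (Nat.log p N), ∑ s ∈ F,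
                  (if p ^ j ∣ (μ * m - s) then 1 else 0) := by
                apply Finset.sum_congr rfl
                intro p _
                exact Finset.sum_comm
            _ = ∑ p ∈ PB, ∑ j ∈ Finset.Icc 1 (Nat.log p N),
                  ((F.filter (fun s => p ^ j ∣ (μ * m - s))).card) := by
                apply Finset.sum_congr rfl
                intro p _
                apply Finset.sum_congr rfl
                intro j _
                simpa using (Finset.sum_boole (s := F)
                  (p := fun s => p ^ j ∣ (μ * m - s)) (h := fun s => Classical.dec _))
  -- modulus for each (p, j)
  set dd : ℕ → ℕ → ℕ := fun p j => if p = 2 then 2^(max j K) else p^j * 2^K with hdd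
  have hddpos : ∀ p j, 1 ≤ p → 0 < dd p j := by
    intro p j hp
    rw [hdd]
    dsimp only
    split_ifs
    · positivity
    · have : 0 < p^j := Nat.pow_pos (by omega)
      positivity
  have hcard : ∀ p ∈ PB, ∀ j ∈ Finset.Icc 1 (Nat.log p N),
      (F.filter (fun s => p ^ j ∣ (μ * m - s))).card ≤ m / dd p j + 2 := by
    intro p hp j hj
    have hp' : p.Prime := Nat.prime_of_mem_primesBelow hp
    refine le_trans (Finset.card_le_card ?_) (count_dvd μ m (dd p j) (by omega)
      (hddpos p j hp'.one_lt.le))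
    intro s hs
    rw [mem_filter] at hs
    obtain ⟨hsF, hdvd⟩ := hs
    have hsI : s ∈ Finset.Icc 1 m := Finset.mem_of_mem_filter s hsF
    have h2K : 2^K ∣ (μ * m - s) := hF2K s hsF
    rw [mem_filter]
    refine ⟨hsI, ?_⟩
    rw [hdd]
    dsimp only
    split_ifs with hp2
    · subst hp2
      rcases le_total j K with h | h
      · rw [max_eq_right h]; exact h2K
      · rw [max_eq_left h]; exact hdvd
    · have hcop : Nat.Coprime (p^j) (2^K) := by
        apply Nat.Coprime.pow
        exact (Nat.coprime_primes hp' Nat.prime_two).mpr hp2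
      exact hcop.mul_dvd_of_dvd_of_dvd hdvd h2K
  -- real-valued bound on the double sum
  set L' := Nat.log 2 (N + 1) with hL'def
  have h2PB : 2 ∈ PB := by
    rw [hPBdef, Nat.mem_primesBelow]
    exact ⟨by omega, Nat.prime_two⟩
  have hTreal : ((∑ p ∈ PB, ∑ j ∈ Finset.Icc 1 (Nat.log p N),
        (F.filter (fun s => p ^ j ∣ (μ * m - s))).card : ℕ) : ℝ)
      ≤ ((K:ℝ)+1) * m / 2^K + (m:ℝ)/2^K * (8 + 8 * Real.log L') + 2*N := by
    push_cast
    have step1 : ∑ p ∈ PB, ∑ j ∈ Finset.Icc 1 (Nat.log p N),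
          ((F.filter (fun s => p ^ j ∣ (μ * m - s))).card : ℝ)
        ≤ ∑ p ∈ PB, ∑ j ∈ Finset.Icc 1 (Nat.log p N), ((m:ℝ)/(dd p j) + 2) := by
      apply Finset.sum_le_sum
      intro p hp
      apply Finset.sum_le_sum
      intro j hj
      have h1 : ((F.filter (fun s => p ^ j ∣ (μ * m - s))).card : ℝ)
          ≤ ((m / dd p j + 2 : ℕ) : ℝ) := by exact_mod_cast hcard p hp j hj
      refine h1.trans ?_
      push_cast
      have := Nat.cast_div_le (α := ℝ) (m := m) (n := dd p j)
      linarith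
    refine step1.trans ?_
    have step2 : ∑ p ∈ PB, ∑ j ∈ Finset.Icc 1 (Nat.log p N), ((m:ℝ)/(dd p j) + 2)
        = (∑ p ∈ PB, ∑ j ∈ Finset.Icc 1 (Nat.log p N), (m:ℝ)/(dd p j))
          + 2 * ∑ p ∈ PB, (Nat.log p N : ℝ) := by
      have hper : ∀ p ∈ PB, ∑ j ∈ Finset.Icc 1 (Nat.log p N), ((m:ℝ)/(dd p j) + 2)
          = (∑ j ∈ Finset.Icc 1 (Nat.log p N), (m:ℝ)/(dd p j)) + 2 * (Nat.log p N : ℝ) := by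
        intro p _
        rw [Finset.sum_add_distrib, Finset.sum_const, Nat.card_Icc, nsmul_eq_mul]
        push_cast
        ring
      rw [Finset.sum_congr rfl hper, Finset.sum_add_distrib, Finset.mul_sum]
    rw [step2]
    have hpairs : 2 * ∑ p ∈ PB, (Nat.log p N : ℝ) ≤ 2 * N := by
      have h1 : ((∑ p ∈ PB, Nat.log p N : ℕ):ℝ) ≤ (N:ℝ) := by
        exact_mod_cast card_pairs N (by omega)
      push_cast at h1
      linarith
    have hmain : ∑ p ∈ PB, ∑ j ∈ Finset.Icc 1 (Nat.log p N), (m:ℝ)/(dd p j)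
        ≤ ((K:ℝ)+1) * m / 2^K + (m:ℝ)/2^K * (8 + 8 * Real.log L') := by
      rw [← Finset.sum_erase_add PB _ h2PB]
      have heven : ∑ j ∈ Finset.Icc 1 (Nat.log 2 N), (m:ℝ)/(dd 2 j)
          ≤ ((K:ℝ)+1) * m / 2^K := by
        have : ∀ j, (m:ℝ)/(dd 2 j) = (m:ℝ)/2^(max j K) := by
          intro j
          rw [hdd]
          dsimp only
          rw [if_pos rfl]
          push_cast
          ring_nf
        rw [Finset.sum_congr rfl (fun j _ => this j)]
        have := even_split K m (Nat.log 2 N)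
        push_cast at this ⊢
        linarith
      have hodd : ∑ p ∈ PB.erase 2, ∑ j ∈ Finset.Icc 1 (Nat.log p N), (m:ℝ)/(dd p j)
          ≤ (m:ℝ)/2^K * (8 + 8 * Real.log L') := by
        have hper : ∀ p ∈ PB.erase 2, ∑ j ∈ Finset.Icc 1 (Nat.log p N), (m:ℝ)/(dd p j)
            ≤ (m:ℝ)/2^K * (2 * ((p:ℝ))⁻¹) := by
          intro p hp
          have hp2 : p ≠ 2 := Finset.ne_of_mem_erase hp
          have hp' : p.Prime := Nat.prime_of_mem_primesBelow (Finset.mem_of_mem_erase hp)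
          have hterm : ∀ j, (m:ℝ)/(dd p j) = (m:ℝ)/2^K * ((p:ℝ)^j)⁻¹ := by
            intro j
            rw [hdd]
            dsimp only
            rw [if_neg hp2]
            push_cast
            rw [div_mul_eq_div_div_swap, div_eq_mul_inv]
          rw [Finset.sum_congr rfl (fun j _ => hterm j), ← Finset.mul_sum]
          apply mul_le_mul_of_nonneg_left _ (by positivity)
          have := geom_inv_sum p (Nat.log p N) hp'.two_le
          rw [div_eq_mul_inv] at this
          exact this
        calc ∑ p ∈ PB.erase 2, ∑ j ∈ Finset.Icc 1 (Nat.log p N), (m:ℝ)/(dd p j)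
            ≤ ∑ p ∈ PB.erase 2, (m:ℝ)/2^K * (2 * ((p:ℝ))⁻¹) := Finset.sum_le_sum hper
          _ = (m:ℝ)/2^K * 2 * ∑ p ∈ PB.erase 2, ((p:ℝ))⁻¹ := by
              rw [Finset.mul_sum]
              apply Finset.sum_congr rfl
              intro p _
              ring
          _ ≤ (m:ℝ)/2^K * 2 * ∑ p ∈ PB, ((p:ℝ))⁻¹ := by
              apply mul_le_mul_of_nonneg_left _ (by positivity)
              apply Finset.sum_le_sum_of_subset_of_nonneg (Finset.erase_subset 2 PB)
              intro k _ _
              positivity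
          _ ≤ (m:ℝ)/2^K * 2 * (4 + 4 * Real.log L') := by
              apply mul_le_mul_of_nonneg_left _ (by positivity)
              exact sum_primes_inv (N+1) (by omega)
          _ = (m:ℝ)/2^K * (8 + 8 * Real.log L') := by ring
      linarith
    push_cast at hmain
    linarith
  -- bound on log L'
  have hm3R : (3:ℝ) ≤ (m:ℝ) := by
    have : (3:ℕ) ≤ m := by omega
    exact_mod_cast this
  have hlogm : (0:ℝ) < Real.log m := Real.log_pos (by linarith)
  have hL'1 : 1 ≤ L' := Nat.log_pos (by norm_num) (by omega)
  have hL'R : (1:ℝ) ≤ (L':ℝ) := by exact_mod_cast hL'1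
  have hN1m2 : N + 1 ≤ m^2 := by
    have h1 : μ ≤ m - 1 := by omega
    have h2 := Nat.mul_le_mul_right m h1
    have h3 : (m-1)*m = m*m - 1*m := Nat.sub_mul m 1 m
    have h4 : m^2 = m*m := sq m
    omega
  have hNpos : (1:ℝ) < (N:ℝ) + 1 := by
    have : (6:ℕ) ≤ N := hN6
    have : (6:ℝ) ≤ (N:ℝ) := by exact_mod_cast this
    linarith
  have hlogN1pos : (0:ℝ) < Real.log ((N:ℝ)+1) := Real.log_pos hNpos
  have hlogN1 : Real.log ((N:ℝ)+1) ≤ 2 * Real.log m := by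
    have h1 : ((N:ℝ)+1) ≤ ((m:ℝ))^2 := by
      have := hN1m2
      have h2 : ((N+1:ℕ):ℝ) ≤ ((m^2:ℕ):ℝ) := by exact_mod_cast this
      push_cast at h2
      linarith
    calc Real.log ((N:ℝ)+1) ≤ Real.log ((m:ℝ)^2) := Real.log_le_log (by linarith) h1
      _ = 2 * Real.log m := by rw [Real.log_pow]; push_cast; ring
  have hL'le : (L':ℝ) ≤ 2 * Real.log ((N:ℝ)+1) := by
    have hpow : (2:ℕ)^L' ≤ N+1 := Nat.pow_log_le_self 2 (by omega)
    have h1 : ((2:ℝ))^L' ≤ (N:ℝ)+1 := by exact_mod_cast hpow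
    have hlog : Real.log ((2:ℝ)^L') ≤ Real.log ((N:ℝ)+1) :=
      Real.log_le_log (by positivity) h1
    rw [Real.log_pow] at hlog
    have hlog2 : (0.6931471803:ℝ) < Real.log 2 := Real.log_two_gt_d9
    have hL0 : (0:ℝ) ≤ (L':ℝ) := Nat.cast_nonneg _
    have h3 : (L':ℝ) * (1/2) ≤ (L':ℝ) * Real.log 2 :=
      mul_le_mul_of_nonneg_left (by linarith) hL0
    linarith
  have hlogL' : Real.log L' ≤ 2 + x := by
    have h1 : Real.log (L':ℝ) ≤ Real.log (2 * Real.log ((N:ℝ)+1)) :=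
      Real.log_le_log (by linarith) hL'le
    rw [Real.log_mul two_ne_zero hlogN1pos.ne'] at h1
    have h2 : Real.log (Real.log ((N:ℝ)+1)) ≤ Real.log (2 * Real.log m) :=
      Real.log_le_log hlogN1pos hlogN1
    rw [Real.log_mul two_ne_zero hlogm.ne'] at h2
    have hlog2le : Real.log 2 ≤ 1 := by
      have := Real.log_two_lt_d9
      linarith
    rw [hxdef]
    linarith
  -- numeric pieces
  have hxpos : (0:ℝ) < x := by linarith
  have p1 : 2*((K:ℝ)+1)/2^K ≤ ε/3*x := by
    have hA : 2*((K:ℝ)+1) ≤ 2*(β+2)*x := by nlinarith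
    have hB : 2*((K:ℝ)+1)/2^K ≤ (2*(β+2)*x)/E :=
      div_le_div₀ (by positivity) hA hEpos hEle2K
    refine hB.trans ?_
    rw [div_le_iff₀ hEpos]
    have hc : (0:ℝ) ≤ ε/3*x := by positivity
    calc 2*(β+2)*x = (ε/3*x) * (6*(β+2)/ε) := by field_simp; ring
      _ ≤ (ε/3*x) * E := mul_le_mul_of_nonneg_left hE1 hc
  have p2 : 2*(8 + 8*Real.log L')/2^K ≤ ε/3*x := by
    have hA : 2*(8 + 8*Real.log L') ≤ 64*x := by nlinarith
    have hB : 2*(8 + 8*Real.log L')/2^K ≤ (64*x)/E := by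
      apply div_le_div₀ (by positivity) hA hEpos hEle2K
    refine hB.trans ?_
    rw [div_le_iff₀ hEpos]
    have hc : (0:ℝ) ≤ ε/3*x := by positivity
    calc 64*x = (ε/3*x) * (192/ε) := by field_simp; ring
      _ ≤ (ε/3*x) * E := mul_le_mul_of_nonneg_left hE2 hc
  have p3 : 4*(μ:ℝ) ≤ ε/3*x := by
    have hc : (0:ℝ) ≤ ε/3 := by positivity
    calc 4*(μ:ℝ) = (ε/3) * (12*μ/ε) := by field_simp; ring
      _ ≤ (ε/3) * x := mul_le_mul_of_nonneg_left hx2 hc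
  -- final assembly
  have hcast : ((∑ s ∈ F, (s + 1) * Delta (μ * m - s) : ℕ) : ℝ)
      ≤ ((m:ℝ) + 1) * ((∑ p ∈ PB, ∑ j ∈ Finset.Icc 1 (Nat.log p N),
          (F.filter (fun s => p ^ j ∣ (μ * m - s))).card : ℕ) : ℝ) := by
    have := step12
    have h2 : ((∑ s ∈ F, (s + 1) * Delta (μ * m - s) : ℕ) : ℝ)
        ≤ (((m + 1) * ∑ p ∈ PB, ∑ j ∈ Finset.Icc 1 (Nat.log p N),
          (F.filter (fun s => p ^ j ∣ (μ * m - s))).card : ℕ) : ℝ) := by exact_mod_cast this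
    push_cast at h2 ⊢
    linarith
  have hTnn : (0:ℝ) ≤ ((∑ p ∈ PB, ∑ j ∈ Finset.Icc 1 (Nat.log p N),
      (F.filter (fun s => p ^ j ∣ (μ * m - s))).card : ℕ) : ℝ) := Nat.cast_nonneg _
  have hNR : (N:ℝ) = (μ:ℝ) * m := by rw [hNdef]; push_cast; ring
  calc ((∑ s ∈ F, (s + 1) * Delta (μ * m - s) : ℕ) : ℝ)
      ≤ ((m:ℝ) + 1) * _ := hcast
    _ ≤ (2*(m:ℝ)) * (((K:ℝ)+1) * m / 2^K + (m:ℝ)/2^K * (8 + 8 * Real.log L') + 2*N) := by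
        apply mul_le_mul (by linarith) hTreal hTnn (by positivity)
    _ = (2*((K:ℝ)+1)/2^K)*(m:ℝ)^2 + (2*(8 + 8*Real.log L')/2^K)*(m:ℝ)^2 + 4*(μ:ℝ)*(m:ℝ)^2 := by
        rw [hNR]; ring
    _ ≤ (ε/3*x)*(m:ℝ)^2 + (ε/3*x)*(m:ℝ)^2 + (ε/3*x)*(m:ℝ)^2 := by
        have hm2 : (0:ℝ) ≤ (m:ℝ)^2 := by positivity
        have q1 := mul_le_mul_of_nonneg_right p1 hm2
        have q2 := mul_le_mul_of_nonneg_right p2 hm2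
        have q3 := mul_le_mul_of_nonneg_right p3 hm2
        linarith
    _ = ε * (m:ℝ)^2 * x := by ring
end

section
/- For every integer μ ≥ 2 there exist constants c > 0, β > 0 and a positive integer M such that for every integer m ≥ M there exists s₀ ∈ {1, 2, …, m} with ν₂(μm − s₀) ≤ β · ln(ln m) and (s₀ + 1) · Δ(μm − s₀) ≥ c · m · ln(ln m). -/
/-- For every integer `μ ≥ 2` there are `c > 0`, `β > 0` and `M` such that for all
`m ≥ M` there exists `s₀ ∈ {1, …, m}` with `ν₂(μm − s₀) ≤ β ln (ln m)` and
`(s₀+1) Δ(μm − s₀) ≥ c m ln (ln m)`. -/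
theorem exists_good_s_low_two_adic (μ : ℕ) (hμ : 2 ≤ μ) :
    ∃ c : ℝ, 0 < c ∧ ∃ β : ℝ, 0 < β ∧ ∃ M : ℕ, 0 < M ∧ ∀ m : ℕ, M ≤ m →
      ∃ s₀ ∈ Finset.Icc 1 m,
        (padicValNat 2 (μ * m - s₀) : ℝ) ≤ β * Real.log (Real.log m) ∧
        (((s₀ + 1) * Delta (μ * m - s₀) : ℕ) : ℝ)
          ≥ c * (m : ℝ) * Real.log (Real.log m) := by
  refine ⟨1/10, by norm_num, 1, one_pos, 100, by norm_num, ?_⟩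
  intro m hm
  set q : ℕ := m / 4 with hq
  set k : ℕ := Nat.log 3 q with hk
  set p : ℕ := 3 ^ k with hpdef
  have hppos : 0 < p := Nat.pow_pos (by norm_num)
  have hp_le : p ≤ q := Nat.pow_log_le_self 3 (by omega)
  have hq_lt : q < 3 ^ (k + 1) := Nat.lt_pow_succ_log_self (by norm_num) q
  set a : ℕ := (μ - 1) * m with ha
  have ham : a + m = μ * m := by
    have : (μ - 1) * m + m = ((μ - 1) + 1) * m := by ring
    rw [ha, this, Nat.sub_add_cancel (by omega)]
  set t0 : ℕ := a / p + 1 with ht0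
  set t : ℕ := if t0 % 2 = 1 then t0 else t0 + 1 with ht
  have ht_odd : t % 2 = 1 := by rw [ht]; split <;> omega
  set n : ℕ := t * p with hn
  have hn_lb : a < n := by
    have h1 : a < t0 * p := Nat.lt_mul_of_div_lt (by omega) hppos
    have h2 : t0 * p ≤ t * p := Nat.mul_le_mul_right p (by rw [ht]; split <;> omega)
    omega
  have hn_ub : n ≤ a + 2 * p := by
    have h1 : t ≤ t0 + 1 := by rw [ht]; split <;> omega
    have h2 : n ≤ (t0 + 1) * p := Nat.mul_le_mul_right p h1
    have h3 : (a / p) * p ≤ a := Nat.div_mul_le_self a p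
    have h4 : (t0 + 1) * p = (a / p) * p + 2 * p := by rw [ht0]; ring
    omega
  set s₀ : ℕ := μ * m - n with hs0
  have hmm : m ≤ a := by
    have : 1 * m ≤ (μ - 1) * m := Nat.mul_le_mul_right m (by omega)
    omega
  have h2q : 4 * q ≤ m := by omega
  have hn_le : n ≤ μ * m := by omega
  have hndiff : μ * m - s₀ = n := by omega
  have hs_range : 1 ≤ s₀ ∧ s₀ ≤ m := by constructor <;> omega
  -- basic real facts
  have hm2 : (2:ℝ) ≤ m := by exact_mod_cast (by omega : 2 ≤ m)
  set L : ℝ := Real.log m with hL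
  have hL4 : (4:ℝ) ≤ L := by
    have h81 : Real.log 81 ≤ L := Real.log_le_log (by norm_num)
      (by exact_mod_cast (by omega : (81:ℕ) ≤ m))
    have h3 : (1:ℝ) ≤ Real.log 3 := by
      rw [Real.le_log_iff_exp_le (by norm_num)]
      calc Real.exp 1 ≤ 2.7182818286 := le_of_lt Real.exp_one_lt_d9
        _ ≤ 3 := by norm_num
    have : Real.log 81 = 4 * Real.log 3 := by
      rw [show (81:ℝ) = 3 ^ (4:ℕ) by norm_num, Real.log_pow]; norm_num
    linarith
  have hloglog_nonneg : 0 ≤ Real.log L := Real.log_nonneg (by linarith)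
  -- padic valuation condition
  have hcond1 : (padicValNat 2 (μ * m - s₀) : ℝ) ≤ 1 * Real.log L := by
    have hnodd : ¬ 2 ∣ n := by
      have hp_odd : p % 2 = 1 := by rw [hpdef, Nat.pow_mod]; norm_num
      have : n % 2 = 1 := by rw [hn, Nat.mul_mod, ht_odd, hp_odd]
      omega
    rw [hndiff, padicValNat.eq_zero_of_not_dvd hnodd]
    push_cast
    linarith
  -- size condition
  have hn0 : n ≠ 0 := by omega
  have hdvd : p ∣ n := hn ▸ dvd_mul_left p t
  have hΔ : k ≤ Delta n := by
    have h1 : k ≤ n.factorization 3 :=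
      (Nat.Prime.pow_dvd_iff_le_factorization Nat.prime_three hn0).mp hdvd
    have h2 : n.factorization 3 ≤ Delta n := by
      rw [← Nat.primeFactorsList_count_eq]
      exact List.count_le_length
    omega
  have hlog2 : Real.log 2 ≤ 0.7 := le_of_lt (lt_of_lt_of_le Real.log_two_lt_d9 (by norm_num))
  have hlog3 : Real.log 3 ≤ 1.4 := by
    have h4 : Real.log 3 ≤ Real.log 4 := Real.log_le_log (by norm_num) (by norm_num)
    have : Real.log 4 = 2 * Real.log 2 := by
      rw [show (4:ℝ) = 2 ^ (2:ℕ) by norm_num, Real.log_pow]; norm_num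
    linarith
  have hlog3' : 0 ≤ Real.log 3 := Real.log_nonneg (by norm_num)
  have hkL : L / 5 ≤ (k : ℝ) := by
    have hq1 : (m:ℝ) < 4 * 3 ^ (k + 1) := by
      have h : m < 4 * 3 ^ (k + 1) := by omega
      exact_mod_cast h
    have hlogm : L ≤ Real.log (4 * 3 ^ (k + 1)) :=
      Real.log_le_log (by linarith) (le_of_lt hq1)
    have hsplit : Real.log (4 * (3:ℝ) ^ (k + 1)) = Real.log 4 + ((k:ℝ) + 1) * Real.log 3 := by
      rw [Real.log_mul (by norm_num) (by positivity), Real.log_pow]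
      push_cast; ring
    have hlog4 : Real.log 4 ≤ 1.4 := by
      have : Real.log 4 = 2 * Real.log 2 := by
        rw [show (4:ℝ) = 2 ^ (2:ℕ) by norm_num, Real.log_pow]; norm_num
      linarith
    have hbound : ((k:ℝ) + 1) * Real.log 3 ≤ ((k:ℝ) + 1) * 1.4 :=
      mul_le_mul_of_nonneg_left hlog3 (by positivity)
    nlinarith
  have hs_big : (m:ℝ) / 2 ≤ (s₀:ℝ) + 1 := by
    have h1 : m ≤ 2 * s₀ + 2 := by omega
    have : (m:ℝ) ≤ 2 * (s₀:ℝ) + 2 := by exact_mod_cast h1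
    linarith
  have hloglogL : Real.log L ≤ L := by
    have := Real.log_le_sub_one_of_pos (show (0:ℝ) < L by linarith)
    linarith
  have hcond2 : (((s₀ + 1) * Delta (μ * m - s₀) : ℕ) : ℝ)
      ≥ 1/10 * (m : ℝ) * Real.log L := by
    rw [hndiff]
    push_cast
    have hΔ' : (k:ℝ) ≤ (Delta n : ℝ) := by exact_mod_cast hΔ
    have key : (m:ℝ) / 2 * (L / 5) ≤ ((s₀:ℝ) + 1) * (Delta n : ℝ) :=
      mul_le_mul hs_big (le_trans hkL hΔ') (by positivity) (by positivity)
    have h10 : 1 / 10 * (m:ℝ) * Real.log L ≤ 1 / 10 * (m:ℝ) * L := by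
      have hm0 : (0:ℝ) ≤ 1 / 10 * (m:ℝ) := by positivity
      nlinarith
    calc (1:ℝ)/10 * m * Real.log L ≤ 1/10 * m * L := h10
      _ = (m:ℝ)/2 * (L/5) := by ring
      _ ≤ ((s₀:ℝ) + 1) * (Delta n : ℝ) := key
  exact ⟨s₀, Finset.mem_Icc.mpr hs_range, hcond1, hcond2⟩
end

section
/- Let λ ∈ (0, 1) and let μ be a real number with μ ≥ 1 and μ·λ < 1. Assume there is a constant K > 0 such that |∑_{k=1}^{N} τ(k) − (N·ln N + (2γ − 1)·N)| ≤ K · N^λ for all integers N ≥ 1, where γ is Euler's constant. Then there exists a constant c > 0 such that for all sufficiently large integers N, max{τ(N + m) : m ∈ ℕ, 1 ≤ m ≤ ⌊N^{1/μ}⌋} > c · ln N; in particular T_N(μ) > c · ln N / τ(N). -/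
set_option maxHeartbeats 1000000


/-- Assuming a divisor-sum asymptotic with error exponent `λ` satisfying `μ·λ < 1`
(`μ ≥ 1`), there is `c > 0` such that for all sufficiently large `N`,
`max_{1 ≤ m ≤ ⌊N^{1/μ}⌋} τ (N + m) > c · ln N`. -/
theorem max_tau_gt_log (lam : ℝ) (hlam : lam ∈ Set.Ioo (0 : ℝ) 1)
    (μ : ℝ) (hμ : 1 ≤ μ) (hμlam : μ * lam < 1)
    (K : ℝ) (hK : 0 < K)
    (hsum : ∀ N : ℕ, 1 ≤ N →
      |(∑ k ∈ Finset.Icc 1 N, (tau k : ℝ)) -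
        ((N : ℝ) * Real.log N + (2 * Real.eulerMascheroniConstant - 1) * N)|
        ≤ K * (N : ℝ) ^ lam) :
    ∃ c : ℝ, 0 < c ∧ ∃ N₀ : ℕ, ∀ N : ℕ, N₀ ≤ N →
      (((Finset.Icc 1 ⌊(N : ℝ) ^ (1 / μ)⌋₊).sup (fun m => tau (N + m)) : ℕ) : ℝ)
        > c * Real.log N := by
  obtain ⟨hlam0, hlam1⟩ := hlam
  have hμ0 : (0:ℝ) < μ := lt_of_lt_of_le one_pos hμ
  have hε0 : 0 < 1/μ := by positivity
  have hε1 : 1/μ ≤ 1 := by rw [div_le_one hμ0]; exact hμ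
  have hlt : lam < 1/μ := by
    rw [lt_div_iff₀ hμ0]; linarith [mul_comm μ lam]
  set γ := Real.eulerMascheroniConstant with hγ
  refine ⟨1/4, by norm_num, ?_⟩
  have hnat : Filter.Tendsto (fun N : ℕ => (N:ℝ)) Filter.atTop Filter.atTop :=
    tendsto_natCast_atTop_atTop
  have h1 : ∀ᶠ N : ℕ in Filter.atTop, 2 ≤ (N:ℝ)^(1/μ) :=
    ((tendsto_rpow_atTop hε0).comp hnat).eventually_ge_atTop 2
  have h2 : ∀ᶠ N : ℕ in Filter.atTop, 4*|2*γ-1| + 1 ≤ Real.log N :=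
    (Real.tendsto_log_atTop.comp hnat).eventually_ge_atTop _
  have h3 : ∀ᶠ N : ℕ in Filter.atTop, 24*K*(N:ℝ)^(lam - 1/μ) ≤ 1 := by
    have ht : Filter.Tendsto (fun N : ℕ => 24*K*(N:ℝ)^(lam - 1/μ))
        Filter.atTop (nhds (24*K*0)) := by
      apply Filter.Tendsto.const_mul
      have := (tendsto_rpow_neg_atTop (by linarith : 0 < 1/μ - lam)).comp hnat
      simpa [neg_sub, Function.comp_def] using this
    rw [mul_zero] at ht
    exact (ht.eventually_lt_const one_pos).mono fun N h => h.le
  have h4 : ∀ᶠ N : ℕ in Filter.atTop, 2 ≤ N := Filter.eventually_ge_atTop 2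
  obtain ⟨N₀, hN₀⟩ := Filter.eventually_atTop.mp (((h1.and h2).and (h3.and h4)))
  refine ⟨N₀, fun N hN => ?_⟩
  obtain ⟨⟨hx2, hlog⟩, herr, h2N⟩ := hN₀ N hN
  set x := (N:ℝ)^(1/μ) with hxdef
  set H := ⌊x⌋₊ with hHdef
  have hN1 : 1 ≤ N := le_trans (by norm_num) h2N
  have hNR : (1:ℝ) ≤ N := by exact_mod_cast hN1
  have hNpos : (0:ℝ) < N := by linarith
  have habs : (0:ℝ) ≤ |2*γ-1| := abs_nonneg _
  have hlog1 : 1 ≤ Real.log N := by linarith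
  have hxH : (H:ℝ) ≤ x := Nat.floor_le (by positivity)
  have hHx : x - 1 < (H:ℝ) := Nat.sub_one_lt_floor x
  have hH2 : 2 ≤ H := Nat.le_floor (by exact_mod_cast hx2)
  have hHR : (2:ℝ) ≤ (H:ℝ) := by exact_mod_cast hH2
  have hHpos : (0:ℝ) < H := by linarith
  have hxN : x ≤ N := by
    calc x ≤ (N:ℝ)^(1:ℝ) := Real.rpow_le_rpow_of_exponent_le hNR hε1
    _ = N := Real.rpow_one _
  have hHN : (H:ℝ) ≤ N := le_trans hxH hxN
  have hxhalf : x/2 ≤ (H:ℝ) := by linarith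
  -- sum splitting
  have hIoc : ∀ M : ℕ, Finset.Icc 1 M = Finset.Ioc 0 M := by
    intro M; ext k; simp [Finset.mem_Icc, Finset.mem_Ioc]; omega
  have hset : Finset.Ioc N (N+H) = (Finset.Icc 1 H).map (addLeftEmbedding N) := by
    rw [Finset.map_add_left_Icc]
    ext k; simp [Finset.mem_Ioc, Finset.mem_Icc]
  have hsplit : ∑ m ∈ Finset.Icc 1 H, (tau (N+m) : ℝ)
      = (∑ k ∈ Finset.Icc 1 (N+H), (tau k : ℝ)) - ∑ k ∈ Finset.Icc 1 N, (tau k : ℝ) := by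
    have e1 : ∑ k ∈ Finset.Ioc N (N+H), (tau k : ℝ)
        = ∑ m ∈ Finset.Icc 1 H, (tau (N+m):ℝ) := by
      rw [hset, Finset.sum_map]
      simp [addLeftEmbedding_apply]
    have e2 : (∑ k ∈ Finset.Ioc 0 N, (tau k : ℝ)) + ∑ k ∈ Finset.Ioc N (N+H), (tau k : ℝ)
        = ∑ k ∈ Finset.Ioc 0 (N+H), (tau k : ℝ) :=
      Finset.sum_Ioc_consecutive _ (Nat.zero_le N) (Nat.le_add_right N H)
    rw [hIoc N, hIoc (N+H), ← e2, e1]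
    ring
  -- bounds from hsum
  have hS1 := abs_le.mp (hsum N hN1)
  have hS2 := abs_le.mp (hsum (N+H) (by omega))
  have hcast : ((N+H : ℕ):ℝ) = (N:ℝ) + (H:ℝ) := by push_cast; ring
  -- error bound : (N+H)^lam ≤ 2 * N^lam
  have herr1 : ((N:ℝ)+(H:ℝ))^lam ≤ 2*(N:ℝ)^lam := by
    have h1' : ((N:ℝ)+(H:ℝ))^lam ≤ (2*(N:ℝ))^lam :=
      Real.rpow_le_rpow (by positivity) (by linarith) hlam0.le
    have h2' : (2*(N:ℝ))^lam = 2^lam * (N:ℝ)^lam :=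
      Real.mul_rpow (by norm_num) (by positivity)
    have h3' : (2:ℝ)^lam ≤ 2^(1:ℝ) :=
      Real.rpow_le_rpow_of_exponent_le one_le_two hlam1.le
    rw [Real.rpow_one] at h3'
    have h4' : (0:ℝ) ≤ (N:ℝ)^lam := by positivity
    nlinarith
  -- 24 K N^lam ≤ x
  have hKx : 24*K*(N:ℝ)^lam ≤ x := by
    have h5 : (N:ℝ)^lam = (N:ℝ)^(lam-1/μ) * x := by
      rw [hxdef, ← Real.rpow_add hNpos]; ring_nf
    have hx0 : (0:ℝ) < x := by linarith
    calc 24*K*(N:ℝ)^lam = (24*K*(N:ℝ)^(lam-1/μ)) * x := by rw [h5]; ring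
    _ ≤ 1 * x := mul_le_mul_of_nonneg_right herr hx0.le
    _ = x := one_mul x
  -- main term
  have hlogmono : Real.log N ≤ Real.log ((N:ℝ)+(H:ℝ)) :=
    Real.log_le_log hNpos (by linarith)
  have key : ((N:ℝ)+(H:ℝ)) * Real.log N ≤ ((N:ℝ)+(H:ℝ)) * Real.log ((N:ℝ)+(H:ℝ)) :=
    mul_le_mul_of_nonneg_left hlogmono (by positivity)
  have key2 : ((N:ℝ)+(H:ℝ)) * Real.log N = (N:ℝ)*Real.log N + (H:ℝ)*Real.log N := by ring
  -- gamma term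
  have hg0 : -(Real.log N/4) ≤ 2*γ-1 := by
    have := neg_abs_le (2*γ-1); linarith
  have hg1 : (-(Real.log N/4)) * (H:ℝ) ≤ (2*γ-1)*(H:ℝ) :=
    mul_le_mul_of_nonneg_right hg0 hHpos.le
  -- error chain
  have he3 : x/8 * 1 ≤ x/8 * Real.log N :=
    mul_le_mul_of_nonneg_left hlog1 (by linarith)
  have he4 : x/8 * Real.log N ≤ (H:ℝ)/4 * Real.log N :=
    mul_le_mul_of_nonneg_right (by linarith) (by linarith)
  have hNlam0 : (0:ℝ) ≤ (N:ℝ)^lam := by positivity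
  -- lower bound on the window sum
  have hwin : (1/2) * ((H:ℝ) * Real.log N) ≤ ∑ m ∈ Finset.Icc 1 H, (tau (N+m) : ℝ) := by
    rw [hsplit]
    have hb1 := hS2.1
    have hb2 := hS1.2
    rw [hcast] at hb1
    have hexp : (2*γ-1)*((N:ℝ)+(H:ℝ)) = (2*γ-1)*(N:ℝ) + (2*γ-1)*(H:ℝ) := by ring
    have he1 : K*(((N:ℝ)+(H:ℝ))^lam) ≤ K*(2*(N:ℝ)^lam) :=
      mul_le_mul_of_nonneg_left herr1 hK.le
    linarith
  -- sup bound
  set s := (Finset.Icc 1 H).sup (fun m => tau (N + m)) with hsdef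
  have hsupnat : ∑ m ∈ Finset.Icc 1 H, tau (N+m) ≤ H * s := by
    have := Finset.sum_le_card_nsmul (Finset.Icc 1 H) (fun m => tau (N+m)) s
      (fun y hy => by rw [hsdef]; exact Finset.le_sup (f := fun m => tau (N + m)) hy)
    simpa [Nat.card_Icc, smul_eq_mul] using this
  have hsupR : ∑ m ∈ Finset.Icc 1 H, (tau (N+m):ℝ) ≤ (H:ℝ) * (s:ℝ) := by
    have h6 : ((∑ m ∈ Finset.Icc 1 H, tau (N+m) : ℕ):ℝ) ≤ ((H*s : ℕ):ℝ) := by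
      exact_mod_cast hsupnat
    push_cast at h6
    exact h6
  have hfinal : (1/2) * Real.log N ≤ (s:ℝ) := by
    have h6 : (1/2) * ((H:ℝ) * Real.log N) ≤ (H:ℝ) * (s:ℝ) := le_trans hwin hsupR
    by_contra hcon
    push_neg at hcon
    have := mul_lt_mul_of_pos_left hcon hHpos
    nlinarith
  have hq : (1/4 : ℝ) * Real.log N < (1/2) * Real.log N := by linarith
  linarith
end

section
/- Let λ ∈ (0, 1) and let μ be a real number with μ ≥ 1 and μ·λ < 1. Assume there is a constant K > 0 such that |∑_{k=1}^{N} τ(k) − (N·ln N + (2γ − 1)·N)| ≤ K · N^λ for all integers N ≥ 1, where γ is Euler's constant. Then there exists a constant C > 0 such that for all integers N ≥ 2, |∑_{k=N+1}^{N+⌊N^{1/μ}⌋} τ(k) − N^{1/μ} · ln N| ≤ C · N^{1/μ}. -/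
set_option maxHeartbeats 1000000


/-- Assuming a divisor-sum asymptotic with error exponent `λ` satisfying `μ·λ < 1`
(`μ ≥ 1`), there is `C > 0` such that for all `N ≥ 2`,
`|∑_{k=N+1}^{N+⌊N^{1/μ}⌋} τ k − N^{1/μ} ln N| ≤ C · N^{1/μ}`. -/
theorem short_interval_divisor_sum (lam : ℝ) (hlam : lam ∈ Set.Ioo (0 : ℝ) 1)
    (μ : ℝ) (hμ : 1 ≤ μ) (hμlam : μ * lam < 1)
    (K : ℝ) (hK : 0 < K)
    (hsum : ∀ N : ℕ, 1 ≤ N →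
      |(∑ k ∈ Finset.Icc 1 N, (tau k : ℝ)) -
        ((N : ℝ) * Real.log N + (2 * Real.eulerMascheroniConstant - 1) * N)|
        ≤ K * (N : ℝ) ^ lam) :
    ∃ C : ℝ, 0 < C ∧ ∀ N : ℕ, 2 ≤ N →
      |(∑ k ∈ Finset.Icc (N + 1) (N + ⌊(N : ℝ) ^ (1 / μ)⌋₊), (tau k : ℝ)) -
        (N : ℝ) ^ (1 / μ) * Real.log N| ≤ C * (N : ℝ) ^ (1 / μ) := by
  obtain ⟨hlam0, hlam1⟩ := hlam
  set γ := Real.eulerMascheroniConstant with hγ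
  have hμ0 : (0:ℝ) < μ := by linarith
  have hinvpos : 0 < 1/μ := by positivity
  have hinvle : 1/μ ≤ 1 := by rw [div_le_one hμ0]; linarith
  have hlamle : lam ≤ 1/μ := by rw [le_div_iff₀ hμ0]; nlinarith
  refine ⟨4*K + μ + 2 + |2*γ - 1| + 1,
    by have := abs_nonneg (2*γ-1); linarith, ?_⟩
  intro N hN
  have hN1 : (1:ℝ) ≤ (N:ℝ) := by exact_mod_cast Nat.one_le_of_lt hN
  have hN0 : (0:ℝ) < (N:ℝ) := by linarith
  set x := (N:ℝ) ^ (1/μ) with hxdef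
  have hx0 : 0 < x := Real.rpow_pos_of_pos hN0 _
  have hx1 : 1 ≤ x := Real.one_le_rpow hN1 hinvpos.le
  have hxN : x ≤ (N:ℝ) := by
    calc x ≤ (N:ℝ) ^ (1:ℝ) := Real.rpow_le_rpow_of_exponent_le hN1 hinvle
    _ = (N:ℝ) := Real.rpow_one _
  set M := ⌊x⌋₊ with hMdef
  have hMx : (M:ℝ) ≤ x := Nat.floor_le hx0.le
  have hxM1 : x < (M:ℝ) + 1 := Nat.lt_floor_add_one x
  have hM1 : 1 ≤ M := Nat.le_floor (by exact_mod_cast hx1)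
  have hMN : (M:ℝ) ≤ (N:ℝ) := hMx.trans hxN
  have hM0 : (0:ℝ) ≤ (M:ℝ) := by positivity
  -- sum splitting
  have hIcc1 : ∀ n : ℕ, Finset.Icc 1 n = Finset.Ioc 0 n := fun n => by
    rw [← Finset.Icc_add_one_left_eq_Ioc, zero_add]
  have key : (∑ k ∈ Finset.Icc 1 N, (tau k : ℝ)) +
      (∑ k ∈ Finset.Icc (N+1) (N+M), (tau k : ℝ)) =
      ∑ k ∈ Finset.Icc 1 (N+M), (tau k : ℝ) := by
    rw [hIcc1, hIcc1, Finset.Icc_add_one_left_eq_Ioc]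
    exact Finset.sum_Ioc_consecutive _ (Nat.zero_le N) (Nat.le_add_right N M)
  set S1 := ∑ k ∈ Finset.Icc 1 N, (tau k : ℝ) with hS1
  set S2 := ∑ k ∈ Finset.Icc 1 (N+M), (tau k : ℝ) with hS2
  have E1 := hsum N (by omega)
  have E2 := hsum (N+M) (by omega)
  push_cast at E2
  set L1 := Real.log (N:ℝ) with hL1
  set L2 := Real.log ((N:ℝ) + (M:ℝ)) with hL2
  have hL1nonneg : 0 ≤ L1 := Real.log_nonneg hN1
  have hL21nonneg : 0 ≤ L2 - L1 := by
    have := Real.log_le_log hN0 (by linarith : (N:ℝ) ≤ (N:ℝ) + M)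
    linarith
  have hL21 : L2 - L1 ≤ (M:ℝ)/(N:ℝ) := by
    have hdiv : L2 - L1 = Real.log (((N:ℝ)+M)/N) :=
      (Real.log_div (by positivity) (by positivity)).symm
    have h2 := Real.log_le_sub_one_of_pos (show (0:ℝ) < ((N:ℝ)+M)/N by positivity)
    rw [hdiv]
    have : ((N:ℝ)+M)/N - 1 = (M:ℝ)/N := by field_simp; ring
    linarith
  have hlogN : L1 ≤ μ * x := by
    have hlx : Real.log x = (1/μ) * L1 := Real.log_rpow hN0 _
    have h2 : Real.log x ≤ x := by
      have := Real.log_le_sub_one_of_pos hx0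
      linarith
    have h3 : L1 = μ * Real.log x := by
      rw [hlx]; field_simp
    rw [h3]
    exact mul_le_mul_of_nonneg_left h2 hμ0.le
  -- error term bounds
  have hNlam : (N:ℝ)^lam ≤ x := Real.rpow_le_rpow_of_exponent_le hN1 hlamle
  have b2 : |S1 - ((N:ℝ)*L1 + (2*γ-1)*(N:ℝ))| ≤ K * x := by
    calc |S1 - ((N:ℝ)*L1 + (2*γ-1)*(N:ℝ))| ≤ K * (N:ℝ)^lam := E1
    _ ≤ K * x := mul_le_mul_of_nonneg_left hNlam hK.le
  have b1 : |S2 - (((N:ℝ)+M)*L2 + (2*γ-1)*((N:ℝ)+M))| ≤ 2 * K * x := by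
    have e2 : |S2 - (((N:ℝ)+M)*L2 + (2*γ-1)*((N:ℝ)+M))| ≤ K * ((N:ℝ)+M)^lam := E2
    have h1 : ((N:ℝ)+M)^lam ≤ (2*(N:ℝ))^lam :=
      Real.rpow_le_rpow (by positivity) (by linarith) hlam0.le
    have h2 : (2*(N:ℝ))^lam = 2^lam * (N:ℝ)^lam := Real.mul_rpow (by norm_num) (by positivity)
    have h3 : (2:ℝ)^lam ≤ 2 := by
      calc (2:ℝ)^lam ≤ (2:ℝ)^(1:ℝ) := Real.rpow_le_rpow_of_exponent_le one_le_two hlam1.le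
      _ = 2 := Real.rpow_one 2
    have h4 : (0:ℝ) ≤ (N:ℝ)^lam := by positivity
    have h5 : ((N:ℝ)+M)^lam ≤ 2 * x := by
      rw [h2] at h1
      nlinarith
    calc |S2 - (((N:ℝ)+M)*L2 + (2*γ-1)*((N:ℝ)+M))| ≤ K * ((N:ℝ)+M)^lam := e2
    _ ≤ K * (2*x) := mul_le_mul_of_nonneg_left h5 hK.le
    _ = 2 * K * x := by ring
  have b3 : |((M:ℝ) - x) * L1| ≤ μ * x := by
    have habs : |(M:ℝ) - x| ≤ 1 := abs_le.2 ⟨by linarith, by linarith⟩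
    calc |((M:ℝ) - x) * L1| = |(M:ℝ) - x| * L1 := by
          rw [abs_mul, abs_of_nonneg hL1nonneg]
    _ ≤ 1 * L1 := mul_le_mul_of_nonneg_right habs hL1nonneg
    _ = L1 := one_mul _
    _ ≤ μ * x := hlogN
  have b4 : ((M:ℝ) + N) * (L2 - L1) ≤ 2 * x := by
    have h1 : ((M:ℝ) + N) * (L2 - L1) ≤ ((M:ℝ) + N) * ((M:ℝ)/N) :=
      mul_le_mul_of_nonneg_left hL21 (by positivity)
    have h2 : ((M:ℝ) + N) * ((M:ℝ)/N) ≤ 2 * x := by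
      have heq : ((M:ℝ) + N) * ((M:ℝ)/N) = (((M:ℝ) + N) * M) / N := by ring
      rw [heq, div_le_iff₀ hN0]
      have hMM : (M:ℝ)*(M:ℝ) ≤ x*(N:ℝ) := by
        calc (M:ℝ)*(M:ℝ) ≤ x*x := mul_le_mul hMx hMx hM0 hx0.le
        _ ≤ x*(N:ℝ) := mul_le_mul_of_nonneg_left hxN hx0.le
      have hNM : (N:ℝ)*(M:ℝ) ≤ (N:ℝ)*x := mul_le_mul_of_nonneg_left hMx hN0.le
      nlinarith [hMM, hNM]
    linarith
  have b5 : |(2*γ-1) * (M:ℝ)| ≤ |2*γ-1| * x := by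
    rw [abs_mul, Nat.abs_cast]
    exact mul_le_mul_of_nonneg_left hMx (abs_nonneg _)
  have hshort : (∑ k ∈ Finset.Icc (N+1) (N+M), (tau k : ℝ)) = S2 - S1 := by
    linarith [key]
  rw [hshort]
  have hdecomp : S2 - S1 - x * L1 =
      (S2 - (((N:ℝ)+M)*L2 + (2*γ-1)*((N:ℝ)+M))) +
      (-(S1 - ((N:ℝ)*L1 + (2*γ-1)*(N:ℝ)))) +
      ((M:ℝ) - x) * L1 +
      ((M:ℝ) + N) * (L2 - L1) +
      (2*γ-1) * (M:ℝ) := by ring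
  rw [hdecomp]
  have t1 := abs_add_le ((S2 - (((N:ℝ)+M)*L2 + (2*γ-1)*((N:ℝ)+M))) +
      (-(S1 - ((N:ℝ)*L1 + (2*γ-1)*(N:ℝ)))) + ((M:ℝ) - x) * L1 + ((M:ℝ) + N) * (L2 - L1))
      ((2*γ-1) * (M:ℝ))
  have t2 := abs_add_le ((S2 - (((N:ℝ)+M)*L2 + (2*γ-1)*((N:ℝ)+M))) +
      (-(S1 - ((N:ℝ)*L1 + (2*γ-1)*(N:ℝ)))) + ((M:ℝ) - x) * L1) (((M:ℝ) + N) * (L2 - L1))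
  have t3 := abs_add_le ((S2 - (((N:ℝ)+M)*L2 + (2*γ-1)*((N:ℝ)+M))) +
      (-(S1 - ((N:ℝ)*L1 + (2*γ-1)*(N:ℝ))))) (((M:ℝ) - x) * L1)
  have t4 := abs_add_le (S2 - (((N:ℝ)+M)*L2 + (2*γ-1)*((N:ℝ)+M)))
      (-(S1 - ((N:ℝ)*L1 + (2*γ-1)*(N:ℝ))))
  rw [abs_neg] at t4
  have habsD : |((M:ℝ) + N) * (L2 - L1)| = ((M:ℝ) + N) * (L2 - L1) :=
    abs_of_nonneg (by positivity)
  rw [habsD] at t2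
  have hfinal : 2*K*x + K*x + μ*x + 2*x + |2*γ-1| * x ≤ (4*K + μ + 2 + |2*γ-1| + 1)*x := by
    nlinarith [mul_nonneg hK.le hx0.le, hx0.le]
  linarith [t1, t2, t3, t4, b1, b2, b3, b4, b5, hfinal]
end
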